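/- Let p and q be distinct odd primes, and let (G,γ) be a (ℤ/pℤ × ℤ/qℤ)-colored graph with n vertices and 2n − 1 edges. Then (G,γ) is a cone-Laman graph if and only if its symmetric lift is Laman-sparse. -/

import Mathlib

/-!
Preamble: finite directed multigraphs with edge colors in an abelian group
("colored graphs"), gain groups and ρ-rank, the Ross / cone-Laman /
cylinder-Laman sparsity counts, colored Henneberg moves, undirected
multigraphs, (k,ℓ)-sparsity, uncolored Henneberg moves, and symmetric lifts.
-/

/-- A finite directed multigraph with edge colors in `Γ` (a "Γ-colored graph").
Self-loops and parallel edges are allowed. -/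
structure CMG (Γ : Type) where
  V : Type
  E : Type
  finV : Finite V
  finE : Finite E
  src : E → V
  dst : E → V
  color : E → Γ

attribute [instance] CMG.finV CMG.finE

instance {α : Type*} [Finite α] : Finite (Option α) :=
  Finite.of_equiv _ (Equiv.optionEquivSumPUnit.{0} α).symm

namespace CMG

variable {Γ : Type} [AddCommGroup Γ]

/-- `e` is an edge from `a` to `v` with color `c`, in the oriented sense:
either it is stored as `a → v` with color `c`, or as `v → a` with color `-c`
(reversing an edge while negating its color gives the same colored graph). -/
def IsEdgeFromTo (G : CMG Γ) (e : G.E) (a v : G.V) (c : Γ) : Prop :=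
  (G.src e = a ∧ G.dst e = v ∧ G.color e = c) ∨
    (G.src e = v ∧ G.dst e = a ∧ G.color e = -c)

/-- `e` is incident to the vertex `v`. -/
def Incident (G : CMG Γ) (e : G.E) (v : G.V) : Prop :=
  G.src e = v ∨ G.dst e = v

/-- `e` is a self-loop at `v`. -/
def IsLoopAt (G : CMG Γ) (e : G.E) (v : G.V) : Prop :=
  G.src e = v ∧ G.dst e = v

/-- The vertices of the edge-induced subgraph on the edge set `F`. -/
def vertsIn (G : CMG Γ) (F : Set G.E) : Set G.V :=
  {v | ∃ e ∈ F, G.Incident e v}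

/-- `Walk G F u w γ`: there is a walk inside the edge set `F` from `u` to `w`
whose signed color sum (colors of forward-traversed edges added, colors of
backward-traversed edges subtracted) is `γ`. -/
inductive Walk (G : CMG Γ) (F : Set G.E) : G.V → G.V → Γ → Prop
  | nil (v : G.V) : Walk G F v v 0
  | fwd {x : G.V} {γ : Γ} (e : G.E) (he : e ∈ F) (hw : Walk G F (G.dst e) x γ) :
      Walk G F (G.src e) x (G.color e + γ)
  | bwd {x : G.V} {γ : Γ} (e : G.E) (he : e ∈ F) (hw : Walk G F (G.src e) x γ) :
      Walk G F (G.dst e) x (-G.color e + γ)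

/-- `u` and `w` are joined by a walk in the edge set `F`. -/
def Reaches (G : CMG Γ) (F : Set G.E) (u w : G.V) : Prop :=
  ∃ γ, G.Walk F u w γ

/-- The connected component of `v` in the edge set `F`. -/
def comp (G : CMG Γ) (F : Set G.E) (v : G.V) : Set G.V :=
  {w | G.Reaches F v w}

/-- The gain group (ρ-image) of the edge set `F` based at the vertex `v`:
the subgroup of `Γ` generated by the signed color sums of closed walks at `v`. -/
def gainGroup (G : CMG Γ) (F : Set G.E) (v : G.V) : AddSubgroup Γ :=
  AddSubgroup.closure {γ | G.Walk F v v γ}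

/-- The ρ-image of the whole edge set `F` (over all base vertices). -/
def totalGain (G : CMG Γ) (F : Set G.E) : AddSubgroup Γ :=
  AddSubgroup.closure {γ | ∃ v, G.Walk F v v γ}

end CMG

/-- The rank of a subgroup of an abelian group: the minimal cardinality of a
finite generating set. -/
noncomputable def subgroupRank {Γ : Type} [AddCommGroup Γ] (H : AddSubgroup Γ) : ℕ :=
  sInf {n | ∃ s : Finset Γ, s.card = n ∧ AddSubgroup.closure (s : Set Γ) = H}

namespace CMG

variable {Γ : Type} [AddCommGroup Γ]

/-- The number of connected components of the edge-induced subgraph on `F`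
whose ρ-rank is `i`. -/
noncomputable def compCount (G : CMG Γ) (F : Set G.E) (i : ℕ) : ℕ :=
  Set.ncard {S : Set G.V |
    ∃ v ∈ G.vertsIn F, S = G.comp F v ∧ subgroupRank (G.gainGroup F v) = i}

/-- The number of connected components of the whole graph (all vertices,
all edges) whose ρ-rank is `i`. -/
noncomputable def compCountTop (G : CMG Γ) (i : ℕ) : ℕ :=
  Set.ncard {S : Set G.V |
    ∃ v : G.V, S = G.comp Set.univ v ∧ subgroupRank (G.gainGroup Set.univ v) = i}

/-- The Ross count `m' ≤ 2n' - 3c₀' - 2(c₁' + c₂')` for one edge set. -/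
def RossCount (G : CMG Γ) (F : Set G.E) : Prop :=
  (F.ncard : ℤ) ≤ 2 * (G.vertsIn F).ncard - 3 * G.compCount F 0
    - 2 * (G.compCount F 1 + G.compCount F 2)

/-- Ross sparsity: the Ross count holds for every edge-induced subgraph. -/
def IsRossSparse (G : CMG Γ) : Prop :=
  ∀ F : Set G.E, G.RossCount F

/-- A Ross graph: Ross-sparse and the count holds with equality on the whole
graph. -/
def IsRossGraph (G : CMG Γ) : Prop :=
  G.IsRossSparse ∧
    (Nat.card G.E : ℤ) = 2 * Nat.card G.V - 3 * G.compCountTop 0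
      - 2 * (G.compCountTop 1 + G.compCountTop 2)

/-- The cone-Laman count `m' ≤ 2n' - 3c₀' - c₁' - c₂'` for one edge set. -/
def ConeLamanCount (G : CMG Γ) (F : Set G.E) : Prop :=
  (F.ncard : ℤ) ≤ 2 * (G.vertsIn F).ncard - 3 * G.compCount F 0
    - G.compCount F 1 - G.compCount F 2

/-- Cone-Laman sparsity. -/
def IsConeLamanSparse (G : CMG Γ) : Prop :=
  ∀ F : Set G.E, G.ConeLamanCount F

/-- A cone-Laman graph: cone-Laman-sparse with equality on the whole graph. -/
def IsConeLaman (G : CMG Γ) : Prop :=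
  G.IsConeLamanSparse ∧
    (Nat.card G.E : ℤ) = 2 * Nat.card G.V - 3 * G.compCountTop 0
      - G.compCountTop 1 - G.compCountTop 2

/-- The cylinder-Laman count `m' ≤ 2n' + r - 3c₀' - 2(c₁' + c₂')`. -/
def CylinderLamanCount (G : CMG Γ) (F : Set G.E) : Prop :=
  (F.ncard : ℤ) ≤ 2 * (G.vertsIn F).ncard + subgroupRank (G.totalGain F)
    - 3 * G.compCount F 0 - 2 * (G.compCount F 1 + G.compCount F 2)

/-- Cylinder-Laman sparsity. -/
def IsCylinderLamanSparse (G : CMG Γ) : Prop :=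
  ∀ F : Set G.E, G.CylinderLamanCount F

/-- A cylinder-Laman graph: cylinder-Laman-sparse with equality on the whole
graph. -/
def IsCylinderLaman (G : CMG Γ) : Prop :=
  G.IsCylinderLamanSparse ∧
    (Nat.card G.E : ℤ) = 2 * Nat.card G.V + subgroupRank (G.totalGain Set.univ)
      - 3 * G.compCountTop 0 - 2 * (G.compCountTop 1 + G.compCountTop 2)

/-- Isomorphism of colored graphs; an edge may be reversed provided its color
is negated (which represents the same colored graph). -/
def Iso (G H : CMG Γ) : Prop :=
  ∃ (fv : G.V ≃ H.V) (fe : G.E ≃ H.E), ∀ e : G.E,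
    (H.src (fe e) = fv (G.src e) ∧ H.dst (fe e) = fv (G.dst e) ∧
      H.color (fe e) = G.color e) ∨
    (H.src (fe e) = fv (G.dst e) ∧ H.dst (fe e) = fv (G.src e) ∧
      H.color (fe e) = -G.color e)

/-- Delete a vertex and all edges incident to it. -/
def deleteVertex (G : CMG Γ) (v : G.V) : CMG Γ where
  V := {w : G.V // w ≠ v}
  E := {e : G.E // G.src e ≠ v ∧ G.dst e ≠ v}
  finV := inferInstance
  finE := inferInstance
  src := fun e => ⟨G.src e.1, e.2.1⟩
  dst := fun e => ⟨G.dst e.1, e.2.2⟩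
  color := fun e => G.color e.1

/-- Add a single new directed edge from `x` to `y` with color `c`. -/
def addEdge (G : CMG Γ) (x y : G.V) (c : Γ) : CMG Γ where
  V := G.V
  E := Option G.E
  finV := inferInstance
  finE := inferInstance
  src := fun e => e.elim x G.src
  dst := fun e => e.elim y G.dst
  color := fun e => e.elim c G.color

/-- The other endpoint of an edge incident to `v` (junk value on loops). -/
noncomputable def otherEnd (G : CMG Γ) (v : G.V) (e : G.E) : G.V :=
  @ite _ (G.src e = v) (Classical.dec _) (G.dst e) (G.src e)

/-- The color of an edge incident to `v`, read in the direction pointing into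
`v` (junk value on loops). -/
noncomputable def colorInto (G : CMG Γ) (v : G.V) (e : G.E) : Γ :=
  @ite _ (G.dst e = v) (Classical.dec _) (G.color e) (-G.color e)

/-- The colored Henneberg move (H1c): `H` is obtained from `G` by adding one
new vertex `v` and two new edges `av`, `bv` (directed into `v`, which is no
restriction); if `a = b` the two new colors must be distinct. -/
def H1cRel (G H : CMG Γ) : Prop :=
  ∃ (v a b : H.V) (_ : a ≠ v) (_ : b ≠ v) (e₁ e₂ : H.E) (γ₁ γ₂ : Γ),
    e₁ ≠ e₂ ∧
    H.IsEdgeFromTo e₁ a v γ₁ ∧ H.IsEdgeFromTo e₂ b v γ₂ ∧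
    (∀ e, H.Incident e v → e = e₁ ∨ e = e₂) ∧
    (a = b → γ₁ ≠ γ₂) ∧
    Iso G (H.deleteVertex v)

/-- The colored lollipop move (H1c'): `H` is obtained from `G` by adding one
new vertex `v`, one edge `av` with arbitrary color, and one self-loop at `v`
with nonzero color. -/
def H1cpRel (G H : CMG Γ) : Prop :=
  ∃ (v a : H.V) (_ : a ≠ v) (e₁ e₂ : H.E) (γ₁ : Γ),
    e₁ ≠ e₂ ∧
    H.IsEdgeFromTo e₁ a v γ₁ ∧
    H.IsLoopAt e₂ v ∧ H.color e₂ ≠ 0 ∧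
    (∀ e, H.Incident e v → e = e₁ ∨ e = e₂) ∧
    Iso G (H.deleteVertex v)

/-- The colored Henneberg move (H2c): `H` is obtained from `G` by removing an
edge `ab` with color `γ₁ - γ₂`, adding a new vertex `v`, and adding edges
`av`, `bv`, `cv` with colors `γ₁`, `γ₂`, `γ₃` (oriented into `v`, which is no
restriction); parallel new edges must have distinct colors. -/
def H2cRel (G H : CMG Γ) : Prop :=
  ∃ (v a b c : H.V) (ha : a ≠ v) (hb : b ≠ v) (_ : c ≠ v)
      (e₁ e₂ e₃ : H.E) (γ₁ γ₂ γ₃ : Γ),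
    e₁ ≠ e₂ ∧ e₁ ≠ e₃ ∧ e₂ ≠ e₃ ∧
    H.IsEdgeFromTo e₁ a v γ₁ ∧ H.IsEdgeFromTo e₂ b v γ₂ ∧
    H.IsEdgeFromTo e₃ c v γ₃ ∧
    (∀ e, H.Incident e v → e = e₁ ∨ e = e₂ ∨ e = e₃) ∧
    (a = b → γ₁ ≠ γ₂) ∧ (a = c → γ₁ ≠ γ₃) ∧ (b = c → γ₂ ≠ γ₃) ∧
    Iso G ((H.deleteVertex v).addEdge ⟨a, ha⟩ ⟨b, hb⟩ (γ₁ - γ₂))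

/-- The base graph for Ross graphs: two vertices joined by two parallel
directed edges with distinct colors. -/
def IsRossBase (G : CMG Γ) : Prop :=
  ∃ (u v : G.V) (e₁ e₂ : G.E) (γ₁ γ₂ : Γ),
    u ≠ v ∧ e₁ ≠ e₂ ∧
    (∀ w : G.V, w = u ∨ w = v) ∧ (∀ e : G.E, e = e₁ ∨ e = e₂) ∧
    G.IsEdgeFromTo e₁ u v γ₁ ∧ G.IsEdgeFromTo e₂ u v γ₂ ∧ γ₁ ≠ γ₂

/-- The base graph for cone-Laman and cylinder-Laman graphs: a single vertex
with one self-loop carrying a nonzero color. -/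
def IsLoopBase (G : CMG Γ) : Prop :=
  ∃ (v : G.V) (e : G.E),
    (∀ w : G.V, w = v) ∧ (∀ e' : G.E, e' = e) ∧
    G.IsLoopAt e v ∧ G.color e ≠ 0

/-- `Constructible Base R G`: the colored graph `G` can be produced from a
base graph (a graph satisfying `Base`) by a finite sequence of moves from the
relation `R`. -/
inductive Constructible (Base : CMG Γ → Prop) (R : CMG Γ → CMG Γ → Prop) :
    CMG Γ → Prop
  | base (G : CMG Γ) (h : Base G) : Constructible Base R G
  | step (G H : CMG Γ) (hG : Constructible Base R G) (hR : R G H) :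
      Constructible Base R H

/-- The degree of a vertex; a self-loop contributes two. -/
noncomputable def degree (G : CMG Γ) (v : G.V) : ℕ :=
  Nat.card {e : G.E // G.src e = v} + Nat.card {e : G.E // G.dst e = v}

end CMG

/-- Reduce the colors of a `ℤ`-colored graph modulo `p`. -/
def CMG.reduceMod (G : CMG ℤ) (p : ℕ) : CMG (ZMod p) where
  V := G.V
  E := G.E
  finV := G.finV
  finE := G.finE
  src := G.src
  dst := G.dst
  color := fun e => ((G.color e : ℤ) : ZMod p)

/-- An undirected multigraph (possibly infinite), given by the two endpoint
functions of its edges; the orientation of an edge carries no information. -/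
structure UMG where
  V : Type
  E : Type
  fst : E → V
  snd : E → V

namespace UMG

/-- The edge `e` joins `u` and `w`. -/
def Betw (M : UMG) (e : M.E) (u w : M.V) : Prop :=
  (M.fst e = u ∧ M.snd e = w) ∨ (M.fst e = w ∧ M.snd e = u)

/-- `e` is incident to `v`. -/
def Incident (M : UMG) (e : M.E) (v : M.V) : Prop :=
  M.fst e = v ∨ M.snd e = v

/-- `e` is a self-loop. -/
def IsLoop (M : UMG) (e : M.E) : Prop :=
  M.fst e = M.snd e

/-- The vertices of the edge-induced subgraph on the edge set `F`. -/
def uverts (M : UMG) (F : Set M.E) : Set M.V :=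
  {v | ∃ e ∈ F, M.Incident e v}

/-- `(k,ℓ)`-sparsity: every (finite, nonempty) edge-induced subgraph with `n'`
vertices and `m'` edges satisfies `m' ≤ k n' - ℓ`. -/
def Sparse (M : UMG) (k ℓ : ℤ) : Prop :=
  ∀ F : Set M.E, F.Finite → F.Nonempty →
    (F.ncard : ℤ) ≤ k * (M.uverts F).ncard - ℓ

/-- Laman-sparse means `(2,3)`-sparse. -/
def LamanSparse (M : UMG) : Prop :=
  M.Sparse 2 3

/-- `F` is a (finite, nonempty) violation of the Laman count. -/
def ViolatesLaman (M : UMG) (F : Set M.E) : Prop :=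
  F.Finite ∧ F.Nonempty ∧ ¬ ((F.ncard : ℤ) ≤ 2 * (M.uverts F).ncard - 3)

/-- A Laman-circuit: an edge-minimal violation of Laman sparsity. -/
def LamanCircuit (M : UMG) (C : Set M.E) : Prop :=
  M.ViolatesLaman C ∧ ∀ F : Set M.E, F ⊂ C → ¬ M.ViolatesLaman F

/-- Connectivity inside an edge set. -/
def Reaches (M : UMG) (F : Set M.E) : M.V → M.V → Prop :=
  Relation.ReflTransGen (fun u w => ∃ e ∈ F, M.Betw e u w)

/-- The edge-induced subgraph on `F` is connected. -/
def ConnectedOn (M : UMG) (F : Set M.E) : Prop :=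
  ∀ u ∈ M.uverts F, ∀ w ∈ M.uverts F, M.Reaches F u w

/-- The induced sub-multigraph on a set of vertices. -/
def induce (M : UMG) (W : Set M.V) : UMG where
  V := W
  E := {e : M.E // M.fst e ∈ W ∧ M.snd e ∈ W}
  fst := fun e => ⟨M.fst e.1, e.2.1⟩
  snd := fun e => ⟨M.snd e.1, e.2.2⟩

/-- Delete a vertex and all edges incident to it. -/
def deleteVertex (M : UMG) (v : M.V) : UMG :=
  M.induce {w | w ≠ v}

/-- Add a single new edge joining `x` and `y`. -/
def addEdge (M : UMG) (x y : M.V) : UMG where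
  V := M.V
  E := Option M.E
  fst := fun e => e.elim x M.fst
  snd := fun e => e.elim y M.snd

/-- Add a family of new edges indexed by `I`. -/
def addEdges (M : UMG) (I : Type) (x y : I → M.V) : UMG where
  V := M.V
  E := M.E ⊕ I
  fst := Sum.elim M.fst x
  snd := Sum.elim M.snd y

/-- Isomorphism of undirected multigraphs. -/
def Iso (M N : UMG) : Prop :=
  ∃ (fv : M.V ≃ N.V) (fe : M.E ≃ N.E), ∀ e : M.E,
    (N.fst (fe e) = fv (M.fst e) ∧ N.snd (fe e) = fv (M.snd e)) ∨
    (N.fst (fe e) = fv (M.snd e) ∧ N.snd (fe e) = fv (M.fst e))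

/-- The other endpoint of an edge incident to `v` (junk value on loops). -/
noncomputable def otherEnd (M : UMG) (v : M.V) (e : M.E) : M.V :=
  @ite _ (M.fst e = v) (Classical.dec _) (M.snd e) (M.fst e)

/-- The uncolored Henneberg move (H1), adding the vertex `w`: `N` is obtained
from `M` by adding the new vertex `w` together with two edges joining `w` to
the old graph. -/
def H1At (M N : UMG) (w : N.V) : Prop :=
  (∃ e₁ e₂ : N.E, e₁ ≠ e₂ ∧ N.Incident e₁ w ∧ N.Incident e₂ w ∧
      ¬ N.IsLoop e₁ ∧ ¬ N.IsLoop e₂ ∧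
      ∀ e, N.Incident e w → e = e₁ ∨ e = e₂) ∧
    Iso (N.deleteVertex w) M

/-- The uncolored Henneberg move (H2), splitting an edge between `x` and `y`
and adding the new degree-three vertex `w`: `N` is obtained from `M` by
removing an edge joining `x` and `y` and adding the new vertex `w` together
with edges from `w` to `x`, `y` and some third vertex `z`. -/
def H2SplitAt (M N : UMG) (w x y : N.V) : Prop :=
  (∃ e₁ e₂ e₃ : N.E, e₁ ≠ e₂ ∧ e₁ ≠ e₃ ∧ e₂ ≠ e₃ ∧
      N.Betw e₁ x w ∧ N.Betw e₂ y w ∧ (∃ z, z ≠ w ∧ N.Betw e₃ z w) ∧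
      ∀ e, N.Incident e w → e = e₁ ∨ e = e₂ ∨ e = e₃) ∧
    ∃ (hx : x ≠ w) (hy : y ≠ w),
      Iso ((N.deleteVertex w).addEdge ⟨x, hx⟩ ⟨y, hy⟩) M

/-- The uncolored Henneberg move (H2). -/
def H2Rel (M N : UMG) : Prop :=
  ∃ w x y : N.V, H2SplitAt M N w x y

/-- `(2,2)`-spanning: the graph contains a spanning `(2,2)`-graph. -/
def Spanning22 (M : UMG) : Prop :=
  ∃ F : Set M.E, F.Finite ∧
    (∀ F' : Set M.E, F' ⊆ F → F'.Nonempty →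
      (F'.ncard : ℤ) ≤ 2 * (M.uverts F').ncard - 2) ∧
    (F.ncard : ℤ) = 2 * Nat.card M.V - 2

end UMG

namespace CMG

variable {Γ : Type} [AddCommGroup Γ]

/-- The symmetric lift of a `Γ`-colored graph: vertices `V × Γ`, and each
directed edge `ij` of color `γ` lifts to the edges `{ĩ_δ, j̃_{γ+δ}}`. -/
def liftU (G : CMG Γ) : UMG where
  V := G.V × Γ
  E := G.E × Γ
  fst := fun e => (G.src e.1, e.2)
  snd := fun e => (G.dst e.1, G.color e.1 + e.2)

/-- The lift of an edge set: the union of the fibers over its edges. -/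
def liftEdges (G : CMG Γ) (F : Set G.E) : Set (G.liftU).E :=
  {e | e.1 ∈ F}

/-- The concrete result of the colored Henneberg move (H1c) on `G`, adding a
new vertex `none` and two new edges `a → none`, `b → none` with colors
`γ₁`, `γ₂`. -/
def applyH1c (G : CMG Γ) (a b : G.V) (γ₁ γ₂ : Γ) : CMG Γ where
  V := Option G.V
  E := G.E ⊕ Bool
  finV := inferInstance
  finE := inferInstance
  src := Sum.elim (fun e => some (G.src e)) (fun x => some (cond x b a))
  dst := Sum.elim (fun e => some (G.dst e)) (fun _ => none)
  color := Sum.elim G.color (fun x => cond x γ₂ γ₁)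

/-- The concrete result of the colored Henneberg move (H2c) on `G`: the edge
`f` (from `a := src f` to `b := dst f`) is removed, a new vertex `none` is
added, and edges `a → none`, `b → none`, `c → none` with colors `γ₁`, `γ₂`,
`γ₃` are added. -/
def applyH2c (G : CMG Γ) (f : G.E) (c : G.V) (γ₁ γ₂ γ₃ : Γ) : CMG Γ where
  V := Option G.V
  E := {e : G.E // e ≠ f} ⊕ Fin 3
  finV := inferInstance
  finE := inferInstance
  src := Sum.elim (fun e => some (G.src e.1))
    (fun i => ![some (G.src f), some (G.dst f), some c] i)
  dst := Sum.elim (fun e => some (G.dst e.1)) (fun _ => none)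
  color := Sum.elim (fun e => G.color e.1) (fun i => ![γ₁, γ₂, γ₃] i)

/-- The intermediate uncolored graphs between the lift of `G` and the lift of
`applyH1c G a b γ₁ γ₂`: only the new vertices `ṽ_δ` with `δ ∈ S` (and their
incident edges) are present. -/
def h1cPartial (G : CMG Γ) (a b : G.V) (γ₁ γ₂ : Γ) (S : Set Γ) : UMG :=
  (CMG.liftU (G.applyH1c a b γ₁ γ₂)).induce {w | w.1 ≠ none ∨ w.2 ∈ S}

/-- The intermediate uncolored graphs between the lift of `G` and the lift of
`applyH2c G f c γ₁ γ₂ γ₃`: only the new vertices `ṽ_δ` with `δ ∈ S` (and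
their incident edges) are present, and for `δ ∉ S` the not-yet-split fiber
edge of `f` with endpoints `ã_{δ-γ₁}`, `b̃_{δ-γ₂}` is still present. -/
def h2cPartial (G : CMG Γ) (f : G.E) (c : G.V) (γ₁ γ₂ γ₃ : Γ) (S : Set Γ) :
    UMG :=
  UMG.addEdges
    ((CMG.liftU (G.applyH2c f c γ₁ γ₂ γ₃)).induce {w | w.1 ≠ none ∨ w.2 ∈ S})
    {δ : Γ // δ ∉ S}
    (fun δ => ⟨(some (G.src f), δ.1 - γ₁), Or.inl (by exact Option.some_ne_none _)⟩)
    (fun δ => ⟨(some (G.dst f), δ.1 - γ₂), Or.inl (by exact Option.some_ne_none _)⟩)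

end CMG
/-! ### Auxiliary development -/

namespace CMG

section WalkLemmas

variable {Γ : Type} [AddCommGroup Γ] {G : CMG Γ}

lemma Walk.mono {F F' : Set G.E} (h : F ⊆ F') {u w : G.V} {γ : Γ}
    (hw : G.Walk F u w γ) : G.Walk F' u w γ := by
  induction hw with
  | nil v => exact .nil v
  | fwd e he _ ih => exact .fwd e (h he) ih
  | bwd e he _ ih => exact .bwd e (h he) ih

lemma Walk.cast {F : Set G.E} {u w : G.V} {γ γ' : Γ} (h : γ = γ')
    (hw : G.Walk F u w γ) : G.Walk F u w γ' := h ▸ hw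

lemma Walk.append {F : Set G.E} {u v w : G.V} {γ γ' : Γ}
    (h1 : G.Walk F u v γ) (h2 : G.Walk F v w γ') : G.Walk F u w (γ + γ') := by
  induction h1 with
  | nil v => exact (h2.cast (zero_add γ').symm)
  | fwd e he _ ih => exact (Walk.fwd e he (ih h2)).cast (by abel)
  | bwd e he _ ih => exact (Walk.bwd e he (ih h2)).cast (by abel)

lemma Walk.reverse {F : Set G.E} {u v : G.V} {γ : Γ}
    (h : G.Walk F u v γ) : G.Walk F v u (-γ) := by
  induction h with
  | nil v => exact (Walk.nil v).cast neg_zero.symm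
  | fwd e he _ ih =>
      exact (ih.append ((Walk.nil (G.src e)).bwd e he)).cast (by abel)
  | bwd e he _ ih =>
      exact (ih.append ((Walk.nil (G.dst e)).fwd e he)).cast (by abel)

lemma Reaches.refl (F : Set G.E) (v : G.V) : G.Reaches F v v := ⟨0, .nil v⟩

lemma Reaches.symm {F : Set G.E} {u v : G.V} (h : G.Reaches F u v) :
    G.Reaches F v u := by obtain ⟨γ, hγ⟩ := h; exact ⟨-γ, hγ.reverse⟩

lemma Reaches.trans {F : Set G.E} {u v w : G.V} (h1 : G.Reaches F u v)
    (h2 : G.Reaches F v w) : G.Reaches F u w := by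
  obtain ⟨γ, hγ⟩ := h1; obtain ⟨γ', hγ'⟩ := h2; exact ⟨γ + γ', hγ.append hγ'⟩

lemma comp_eq_of_mem {F : Set G.E} {v w : G.V} (h : w ∈ G.comp F v) :
    G.comp F w = G.comp F v := by
  ext x
  exact ⟨fun hx => (h : G.Reaches F v w).trans hx,
    fun hx => (h : G.Reaches F v w).symm.trans hx⟩

/-- The set of gains of closed walks at `v` is a subgroup. -/
def walkGains (G : CMG Γ) (F : Set G.E) (v : G.V) : AddSubgroup Γ where
  carrier := {γ | G.Walk F v v γ}
  zero_mem' := .nil v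
  add_mem' := fun h1 h2 => h1.append h2
  neg_mem' := fun h => h.reverse

lemma mem_walkGains {F : Set G.E} {v : G.V} {γ : Γ} :
    γ ∈ G.walkGains F v ↔ G.Walk F v v γ := Iff.rfl

lemma gainGroup_eq_walkGains (F : Set G.E) (v : G.V) :
    G.gainGroup F v = G.walkGains F v :=
  AddSubgroup.closure_eq (G.walkGains F v)

lemma walkGains_eq_of_walk {F : Set G.E} {v w : G.V} {α : Γ}
    (h : G.Walk F v w α) : G.walkGains F w = G.walkGains F v := by
  ext γ
  constructor
  · intro hγ
    exact ((h.append hγ).append h.reverse).cast (by abel)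
  · intro hγ
    exact ((h.reverse.append hγ).append h).cast (by abel)

lemma gainGroup_eq_of_reaches {F : Set G.E} {v w : G.V}
    (h : G.Reaches F v w) : G.gainGroup F w = G.gainGroup F v := by
  obtain ⟨α, hα⟩ := h
  rw [gainGroup_eq_walkGains, gainGroup_eq_walkGains, walkGains_eq_of_walk hα]

lemma walk_end_mem {F : Set G.E} {v w : G.V} {γ : Γ} (h : G.Walk F v w γ) :
    w = v ∨ w ∈ G.vertsIn F := by
  induction h with
  | nil v => exact Or.inl rfl
  | fwd e he _ ih =>
      rcases ih with h | h
      · exact Or.inr ⟨e, he, Or.inr h.symm⟩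
      · exact Or.inr h
  | bwd e he _ ih =>
      rcases ih with h | h
      · exact Or.inr ⟨e, he, Or.inl h.symm⟩
      · exact Or.inr h

/-- For a connected edge set, the component of the base vertex is the whole
vertex set. -/
lemma comp_eq_vertsIn {F : Set G.E} {v₀ : G.V} (hv₀ : v₀ ∈ G.vertsIn F)
    (hconn : ∀ e ∈ F, G.Reaches F v₀ (G.src e)) :
    G.comp F v₀ = G.vertsIn F := by
  ext w
  constructor
  · rintro ⟨γ, hγ⟩
    rcases walk_end_mem hγ with h | h
    · exact h ▸ hv₀
    · exact h
  · rintro ⟨e, he, hinc⟩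
    rcases hinc with h | h
    · exact h ▸ hconn e he
    · exact h ▸ (hconn e he).trans ⟨_, (Walk.nil (G.dst e)).fwd e he⟩

end WalkLemmas

end CMG
namespace CMG

section LiftLemmas

variable {Γ : Type} [AddCommGroup Γ] {G : CMG Γ}

lemma lift_fst (ε : (G.liftU).E) : (G.liftU).fst ε = (G.src ε.1, ε.2) := rfl
lemma lift_snd (ε : (G.liftU).E) :
    (G.liftU).snd ε = (G.dst ε.1, G.color ε.1 + ε.2) := rfl

lemma walk_liftReaches {F : Set G.E} {v w : G.V} {γ : Γ}
    (h : G.Walk F v w γ) (δ : Γ) :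
    (G.liftU).Reaches (G.liftEdges F) (v, δ) (w, δ + γ) := by
  induction h generalizing δ with
  | nil v =>
      rw [add_zero]
      exact Relation.ReflTransGen.refl
  | @fwd x γ₁ e he hw ih =>
      rw [show δ + (G.color e + γ₁) = G.color e + δ + γ₁ from by abel]
      exact Relation.ReflTransGen.head ⟨(e, δ), he, Or.inl ⟨rfl, rfl⟩⟩
        (ih (G.color e + δ))
  | @bwd x γ₁ e he hw ih =>
      rw [show δ + (-G.color e + γ₁) = δ - G.color e + γ₁ from by abel]
      refine Relation.ReflTransGen.head
        ⟨(e, δ - G.color e), he, Or.inr ⟨rfl, ?_⟩⟩ (ih (δ - G.color e))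
      erw [lift_snd]
      exact Prod.ext rfl (add_sub_cancel _ _)

lemma liftReaches_walk {F : Set G.E} {x y : (G.liftU).V}
    (h : (G.liftU).Reaches (G.liftEdges F) x y) :
    G.Walk F x.1 y.1 (y.2 - x.2) := by
  induction h using Relation.ReflTransGen.head_induction_on with
  | refl => exact (Walk.nil y.1).cast (by abel)
  | head hstep _ ih =>
      obtain ⟨ε, he, hb⟩ := hstep
      rcases hb with ⟨hf, hs⟩ | ⟨hf, hs⟩
      · subst hf; subst hs
        simp only [lift_fst, lift_snd] at ih ⊢
        exact (Walk.fwd ε.1 he ih).cast (by abel)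
      · subst hf; subst hs
        simp only [lift_fst, lift_snd] at ih ⊢
        exact (Walk.bwd ε.1 he ih).cast (by abel)

variable (G) in
/-- The vertex set of the lift component of `(v₀, δ₀)`. -/
def compV (F : Set G.E) (v₀ : G.V) (δ₀ : Γ) : Set (G.liftU).V :=
  {x | (G.liftU).Reaches (G.liftEdges F) (v₀, δ₀) x}

variable (G) in
/-- The edge set of the lift component of `(v₀, δ₀)`. -/
def compE (F : Set G.E) (v₀ : G.V) (δ₀ : Γ) : Set (G.liftU).E :=
  {ε | ε.1 ∈ F ∧ (G.liftU).fst ε ∈ G.compV F v₀ δ₀}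

variable {F : Set G.E} {v₀ : G.V} {δ₀ : Γ}

lemma mem_compV_iff {x : (G.liftU).V} :
    x ∈ G.compV F v₀ δ₀ ↔ G.Walk F v₀ x.1 (x.2 - δ₀) := by
  constructor
  · intro h
    simpa using liftReaches_walk h
  · intro h
    have := walk_liftReaches h δ₀
    erw [show δ₀ + (x.2 - δ₀) = x.2 from by abel, Prod.mk.eta] at this; exact this

lemma compE_closed {ε : (G.liftU).E} (he : ε.1 ∈ F)
    (h : (G.liftU).fst ε ∈ G.compV F v₀ δ₀ ∨
      (G.liftU).snd ε ∈ G.compV F v₀ δ₀) :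
    ε ∈ G.compE F v₀ δ₀ := by
  rcases h with h | h
  · exact ⟨he, h⟩
  · refine ⟨he, ?_⟩
    rw [mem_compV_iff] at h ⊢
    rw [lift_snd] at h
    rw [lift_fst]
    exact (h.append ((Walk.nil (G.src ε.1)).bwd ε.1 he)).cast (by dsimp only; abel)

lemma snd_mem_compV_of_mem_compE {ε : (G.liftU).E}
    (h : ε ∈ G.compE F v₀ δ₀) : (G.liftU).snd ε ∈ G.compV F v₀ δ₀ := by
  obtain ⟨he, hf⟩ := h
  rw [mem_compV_iff] at hf ⊢
  rw [lift_fst] at hf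
  rw [lift_snd]
  exact (hf.append ((Walk.nil (G.dst ε.1)).fwd ε.1 he)).cast (by dsimp only; abel)

lemma uverts_compE (hv₀ : v₀ ∈ G.vertsIn F)
    (hconn : ∀ e ∈ F, G.Reaches F v₀ (G.src e)) :
    (G.liftU).uverts (G.compE F v₀ δ₀) = G.compV F v₀ δ₀ := by
  ext x
  constructor
  · rintro ⟨ε, hε, hinc⟩
    rcases hinc with h | h
    · exact h ▸ hε.2
    · exact h ▸ snd_mem_compV_of_mem_compE hε
  · intro hx
    have hx' := mem_compV_iff.mp hx
    have hw : x.1 ∈ G.vertsIn F := by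
      rw [← comp_eq_vertsIn hv₀ hconn]
      exact ⟨_, hx'⟩
    obtain ⟨e, he, hinc⟩ := hw
    rcases hinc with h | h
    · refine ⟨(e, x.2), ⟨he, ?_⟩, Or.inl ?_⟩
      · erw [lift_fst, mem_compV_iff]
        exact h ▸ hx'
      · erw [lift_fst, h, Prod.mk.eta]
    · refine ⟨(e, x.2 - G.color e), ⟨he, ?_⟩, Or.inr ?_⟩
      · erw [lift_fst, mem_compV_iff]
        show G.Walk F v₀ (G.src e) (x.2 - G.color e - δ₀)
        have hb : G.Walk F x.1 (G.src e) (-G.color e + 0) :=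
          h ▸ (Walk.nil (G.src e)).bwd e he
        exact (hx'.append hb).cast (by abel)
      · erw [lift_snd]
        exact Prod.ext h (add_sub_cancel _ _)

lemma reaches_within_compE {x : (G.liftU).V} (hx : x ∈ G.compV F v₀ δ₀) :
    (G.liftU).Reaches (G.compE F v₀ δ₀) (v₀, δ₀) x := by
  induction (hx : Relation.ReflTransGen _ _ _) with
  | refl => exact Relation.ReflTransGen.refl
  | tail hab hbc ih =>
      rename_i b c
      obtain ⟨ε, hε, hb⟩ := hbc
      have hbV : b ∈ G.compV F v₀ δ₀ := hab
      have hεC : ε ∈ G.compE F v₀ δ₀ := by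
        rcases hb with ⟨hf, _⟩ | ⟨_, hs⟩
        · exact compE_closed hε (Or.inl (hf ▸ hbV))
        · exact compE_closed hε (Or.inr (hs ▸ hbV))
      exact Relation.ReflTransGen.tail ih ⟨ε, hεC, hb⟩

end LiftLemmas

end CMG
namespace CMG

section CountLemmas

variable {Γ : Type} [AddCommGroup Γ] {G : CMG Γ}
variable {F : Set G.E} {v₀ : G.V} {δ₀ : Γ}

lemma ncard_compV :
    (G.compV F v₀ δ₀).ncard
      = (G.comp F v₀).ncard * Nat.card (G.walkGains F v₀) := by
  classical
  have hch : ∀ w : G.V, ∃ γ, w ∈ G.comp F v₀ → G.Walk F v₀ w γ := by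
    intro w
    by_cases h : w ∈ G.comp F v₀
    · obtain ⟨γ, hγ⟩ := h
      exact ⟨γ, fun _ => hγ⟩
    · exact ⟨0, fun hh => absurd hh h⟩
  choose γ₀ hγ₀ using hch
  rw [← Nat.card_coe_set_eq, ← Nat.card_coe_set_eq, ← Nat.card_prod]
  apply Nat.card_congr
  refine
    { toFun := fun x =>
        (⟨x.1.1, ⟨_, mem_compV_iff.mp x.2⟩⟩,
         ⟨x.1.2 - δ₀ - γ₀ x.1.1, ?_⟩),
      invFun := fun y => ⟨(y.1.1, δ₀ + γ₀ y.1.1 + y.2.1), ?_⟩,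
      left_inv := ?_, right_inv := ?_ }
  · have hw := mem_compV_iff.mp x.2
    have hg := hγ₀ x.1.1 ⟨_, hw⟩
    exact (hw.append hg.reverse).cast (by abel)
  · erw [mem_compV_iff]
    have hg := hγ₀ y.1.1 y.1.2
    have hk : G.Walk F v₀ v₀ y.2.1 := y.2.2
    exact (hk.append hg).cast (by dsimp only; abel)
  · rintro ⟨⟨w, ε⟩, hx⟩
    refine Subtype.ext (Prod.ext rfl ?_)
    show δ₀ + γ₀ w + (ε - δ₀ - γ₀ w) = ε
    abel
  · rintro ⟨⟨w, hw⟩, ⟨k, hk⟩⟩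
    refine Prod.ext (Subtype.ext rfl) (Subtype.ext ?_)
    show δ₀ + γ₀ w + k - δ₀ - γ₀ w = k
    abel

lemma ncard_compE (hconn : ∀ e ∈ F, G.Reaches F v₀ (G.src e)) :
    (G.compE F v₀ δ₀).ncard = F.ncard * Nat.card (G.walkGains F v₀) := by
  classical
  have hch : ∀ w : G.V, ∃ γ, w ∈ G.comp F v₀ → G.Walk F v₀ w γ := by
    intro w
    by_cases h : w ∈ G.comp F v₀
    · obtain ⟨γ, hγ⟩ := h
      exact ⟨γ, fun _ => hγ⟩
    · exact ⟨0, fun hh => absurd hh h⟩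
  choose γ₀ hγ₀ using hch
  rw [← Nat.card_coe_set_eq, ← Nat.card_coe_set_eq, ← Nat.card_prod]
  apply Nat.card_congr
  have hmem : ∀ ε : (G.liftU).E, ε ∈ G.compE F v₀ δ₀ →
      G.Walk F v₀ (G.src ε.1) (ε.2 - δ₀) := by
    intro ε hε
    exact mem_compV_iff.mp hε.2
  refine
    { toFun := fun x =>
        (⟨x.1.1, x.2.1⟩,
         ⟨x.1.2 - δ₀ - γ₀ (G.src x.1.1), ?_⟩),
      invFun := fun y => ⟨(y.1.1, δ₀ + γ₀ (G.src y.1.1) + y.2.1), ?_⟩,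
      left_inv := ?_, right_inv := ?_ }
  · have hw := hmem x.1 x.2
    have hg := hγ₀ (G.src x.1.1) ⟨_, hw⟩
    exact (hw.append hg.reverse).cast (by abel)
  · refine ⟨y.1.2, ?_⟩
    erw [lift_fst, mem_compV_iff]
    show G.Walk F v₀ (G.src y.1.1) (δ₀ + γ₀ (G.src y.1.1) + y.2.1 - δ₀)
    have hg := hγ₀ (G.src y.1.1) (hconn y.1.1 y.1.2)
    have hk : G.Walk F v₀ v₀ y.2.1 := y.2.2
    exact (hk.append hg).cast (by abel)
  · rintro ⟨⟨e, ε⟩, hx⟩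
    refine Subtype.ext (Prod.ext rfl ?_)
    show δ₀ + γ₀ (G.src e) + (ε - δ₀ - γ₀ (G.src e)) = ε
    abel
  · rintro ⟨⟨e, he⟩, ⟨k, hk⟩⟩
    refine Prod.ext (Subtype.ext rfl) (Subtype.ext ?_)
    show δ₀ + γ₀ (G.src e) + k - δ₀ - γ₀ (G.src e) = k
    abel

lemma compE_nonempty (hne : F.Nonempty)
    (hconn : ∀ e ∈ F, G.Reaches F v₀ (G.src e)) :
    (G.compE F v₀ δ₀).Nonempty := by
  obtain ⟨e, he⟩ := hne
  obtain ⟨γ, hγ⟩ := hconn e he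
  refine ⟨(e, δ₀ + γ), he, ?_⟩
  erw [lift_fst, mem_compV_iff]
  show G.Walk F v₀ (G.src e) (δ₀ + γ - δ₀)
  exact hγ.cast (by abel)

/-- For a connected nonempty edge set, there is exactly one component and its
`compCount` is the indicator of its rank. -/
lemma compCount_connected (hv₀ : v₀ ∈ G.vertsIn F)
    (hconn : ∀ e ∈ F, G.Reaches F v₀ (G.src e)) (i : ℕ) :
    G.compCount F i
      = if subgroupRank (G.gainGroup F v₀) = i then 1 else 0 := by
  classical
  have hcv : ∀ v ∈ G.vertsIn F,
      G.comp F v = G.comp F v₀ ∧ G.gainGroup F v = G.gainGroup F v₀ := by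
    intro v hv
    have hv' : v ∈ G.comp F v₀ := by
      rw [comp_eq_vertsIn hv₀ hconn]; exact hv
    exact ⟨comp_eq_of_mem hv', gainGroup_eq_of_reaches hv'⟩
  rw [compCount]
  by_cases h : subgroupRank (G.gainGroup F v₀) = i
  · rw [if_pos h]
    have : {S : Set G.V | ∃ v ∈ G.vertsIn F, S = G.comp F v ∧
        subgroupRank (G.gainGroup F v) = i} = {G.comp F v₀} := by
      ext S
      simp only [Set.mem_setOf_eq, Set.mem_singleton_iff]
      constructor
      · rintro ⟨v, hv, rfl, _⟩
        exact (hcv v hv).1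
      · rintro rfl
        exact ⟨v₀, hv₀, rfl, h⟩
    rw [this, Set.ncard_singleton]
  · rw [if_neg h]
    have : {S : Set G.V | ∃ v ∈ G.vertsIn F, S = G.comp F v ∧
        subgroupRank (G.gainGroup F v) = i} = ∅ := by
      ext S
      simp only [Set.mem_setOf_eq, Set.mem_empty_iff_false, iff_false]
      rintro ⟨v, hv, rfl, hr⟩
      rw [(hcv v hv).2] at hr
      exact h hr
    rw [this, Set.ncard_empty]

end CountLemmas

end CMG
section RankFacts

variable {Γ : Type} [AddCommGroup Γ]

lemma subgroupRank_le_finsetCard (K : AddSubgroup Γ) (s : Finset Γ)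
    (h : AddSubgroup.closure (s : Set Γ) = K) : subgroupRank K ≤ s.card :=
  Nat.sInf_le ⟨s, rfl, h⟩

lemma subgroupRank_bot : subgroupRank (⊥ : AddSubgroup Γ) = 0 := by
  have : subgroupRank (⊥ : AddSubgroup Γ) ≤ 0 := by
    refine subgroupRank_le_finsetCard _ ∅ ?_ |>.trans (le_of_eq Finset.card_empty)
    simp [AddSubgroup.closure_empty]
  omega

lemma eq_bot_of_subgroupRank_eq_zero [Finite Γ] {K : AddSubgroup Γ}
    (h : subgroupRank K = 0) : K = ⊥ := by
  classical
  haveI : Fintype Γ := Fintype.ofFinite Γ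
  have hne : {n | ∃ s : Finset Γ, s.card = n ∧
      AddSubgroup.closure (s : Set Γ) = K}.Nonempty := by
    refine ⟨(K : Set Γ).toFinset.card, (K : Set Γ).toFinset, rfl, ?_⟩
    rw [Set.coe_toFinset]
    exact AddSubgroup.closure_eq K
  have hmem := Nat.sInf_mem hne
  rw [subgroupRank] at h
  rw [h] at hmem
  obtain ⟨s, hs0, hcl⟩ := hmem
  rw [Finset.card_eq_zero] at hs0
  subst hs0
  simpa [AddSubgroup.closure_empty] using hcl.symm

section PQ

variable {p q : ℕ} (hp : p.Prime) (hq : q.Prime) (hop : Odd p) (hoq : Odd q)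
  (hpq : p ≠ q)

include hp hop in
lemma odd_prime_three_le : 3 ≤ p := by
  have h2 := hp.two_le
  have : p ≠ 2 := by
    rintro rfl
    exact absurd hop (by decide)
  omega

include hp hq hpq in
lemma dvd_pq_cases {d : ℕ} (hd : d ∣ p * q) :
    d = 1 ∨ d = p ∨ d = q ∨ d = p * q := by
  by_cases hpd : p ∣ d
  · by_cases hqd : q ∣ d
    · have hco : Nat.Coprime p q := (Nat.coprime_primes hp hq).mpr hpq
      have : p * q ∣ d := hco.mul_dvd_of_dvd_of_dvd hpd hqd
      exact Or.inr (Or.inr (Or.inr (Nat.dvd_antisymm hd this)))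
    · obtain ⟨m, rfl⟩ := hpd
      have hm : m ∣ q := (Nat.mul_dvd_mul_iff_left hp.pos).mp hd
      rcases hq.eq_one_or_self_of_dvd m hm with rfl | h
      · exact Or.inr (Or.inl (mul_one p))
      · subst h
        exact absurd (dvd_mul_left m p) hqd
  · by_cases hqd : q ∣ d
    · obtain ⟨m, rfl⟩ := hqd
      have hm : m ∣ p := by
        refine (Nat.mul_dvd_mul_iff_left hq.pos).mp ?_
        rwa [mul_comm p q] at hd
      rcases hp.eq_one_or_self_of_dvd m hm with rfl | h
      · exact Or.inr (Or.inr (Or.inl (mul_one q)))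
      · subst h
        exact absurd (dvd_mul_left m q) hpd
    · have hcp : Nat.Coprime d p := Nat.Coprime.symm
        ((Nat.Prime.coprime_iff_not_dvd hp).mpr hpd)
      have hcq : Nat.Coprime d q := Nat.Coprime.symm
        ((Nat.Prime.coprime_iff_not_dvd hq).mpr hqd)
      exact Or.inl ((Nat.Coprime.mul_right hcp hcq).eq_one_of_dvd hd)

variable (p q) in
abbrev PQΓ : Type := ZMod p × ZMod q

include hp hq in
lemma card_PQΓ : Nat.card (PQΓ p q) = p * q := by
  haveI : NeZero p := ⟨hp.ne_zero⟩
  haveI : NeZero q := ⟨hq.ne_zero⟩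
  rw [Nat.card_prod, Nat.card_zmod, Nat.card_zmod]

include hp hq in
lemma finite_PQΓ : Finite (PQΓ p q) := by
  haveI : NeZero p := ⟨hp.ne_zero⟩
  haveI : NeZero q := ⟨hq.ne_zero⟩
  infer_instance

include hp hq hop hoq hpq in
lemma card_subgroup_PQ {K : AddSubgroup (PQΓ p q)} (h : K ≠ ⊥) :
    3 ≤ Nat.card K := by
  haveI := finite_PQΓ hp hq
  have hdvd : Nat.card K ∣ p * q := by
    rw [← card_PQΓ hp hq]
    exact AddSubgroup.card_addSubgroup_dvd_card K
  have hne1 : Nat.card K ≠ 1 := fun h1 => h (AddSubgroup.card_eq_one.mp h1)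
  obtain ⟨r, hr, hrd⟩ := Nat.exists_prime_and_dvd hne1
  have hrpq : r ∣ p * q := hrd.trans hdvd
  have hr3 : 3 ≤ r := by
    rcases (Nat.Prime.dvd_mul hr).mp hrpq with h' | h'
    · rw [(Nat.prime_dvd_prime_iff_eq hr hp).mp h']
      exact odd_prime_three_le hp hop
    · rw [(Nat.prime_dvd_prime_iff_eq hr hq).mp h']
      exact odd_prime_three_le hq hoq
  have hpos : 0 < Nat.card K := Nat.card_pos
  exact hr3.trans (Nat.le_of_dvd hpos hrd)

include hp hq hpq in
lemma subgroupRank_le_two_PQ (K : AddSubgroup (PQΓ p q)) :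
    subgroupRank K ≤ 2 := by
  classical
  haveI : NeZero p := ⟨hp.ne_zero⟩
  haveI : NeZero q := ⟨hq.ne_zero⟩
  haveI := finite_PQΓ hp hq
  have hdvd : Nat.card K ∣ p * q := by
    rw [← card_PQΓ hp hq]
    exact AddSubgroup.card_addSubgroup_dvd_card K
  have hprime_case : ∀ r : ℕ, r.Prime → Nat.card K = r → subgroupRank K ≤ 2 := by
    intro r hr hcard
    have hK : K ≠ ⊥ := by
      intro hbot
      rw [hbot] at hcard
      rw [AddSubgroup.card_eq_one.mpr rfl] at hcard
      exact hr.one_lt.ne' hcard.symm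
    obtain ⟨g, hgK, hg0⟩ : ∃ g, g ∈ K ∧ g ≠ 0 := by
      by_contra hc
      push_neg at hc
      exact hK ((AddSubgroup.eq_bot_iff_forall K).mpr hc)
    have hle : AddSubgroup.closure {g} ≤ K := by
      rw [AddSubgroup.closure_le]
      simpa using hgK
    have hord : Nat.card (AddSubgroup.closure {g}) = addOrderOf g := by
      rw [← AddSubgroup.zmultiples_eq_closure, Nat.card_zmultiples]
    have hdvd' : addOrderOf g ∣ r := by
      rw [← hcard]
      exact AddSubgroup.addOrderOf_dvd_natCard K hgK
    have hne1' : addOrderOf g ≠ 1 := by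
      simpa [AddMonoid.addOrderOf_eq_one_iff] using hg0
    have : addOrderOf g = r := ((Nat.Prime.eq_one_or_self_of_dvd hr _
      hdvd').resolve_left hne1')
    have heq : AddSubgroup.closure {g} = K := by
      apply AddSubgroup.eq_of_le_of_card_ge hle
      rw [hord, this, hcard]
    calc subgroupRank K ≤ ({g} : Finset _).card :=
          subgroupRank_le_finsetCard K {g} (by simpa using heq)
      _ ≤ 2 := by simp
  rcases dvd_pq_cases hp hq hpq hdvd with h1 | h1 | h1 | h1
  · rw [AddSubgroup.card_eq_one.mp h1, subgroupRank_bot]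
    omega
  · exact hprime_case p hp h1
  · exact hprime_case q hq h1
  · have hKtop : K = ⊤ := by
      apply AddSubgroup.eq_top_of_card_eq
      rw [h1, card_PQΓ hp hq]
    have hgen : AddSubgroup.closure
        (({((1 : ZMod p), (0 : ZMod q)), ((0 : ZMod p), (1 : ZMod q))} :
          Finset (PQΓ p q)) : Set (PQΓ p q)) = K := by
      rw [hKtop]
      rw [eq_top_iff]
      rintro ⟨a, b⟩ -
      have h1m : ((1 : ZMod p), (0 : ZMod q)) ∈ AddSubgroup.closure
          (({((1 : ZMod p), (0 : ZMod q)), ((0 : ZMod p), (1 : ZMod q))} :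
            Finset (PQΓ p q)) : Set (PQΓ p q)) :=
        AddSubgroup.subset_closure (by simp)
      have h2m : ((0 : ZMod p), (1 : ZMod q)) ∈ AddSubgroup.closure
          (({((1 : ZMod p), (0 : ZMod q)), ((0 : ZMod p), (1 : ZMod q))} :
            Finset (PQΓ p q)) : Set (PQΓ p q)) :=
        AddSubgroup.subset_closure (by simp)
      have ha : (a, (0 : ZMod q)) = a.val • ((1 : ZMod p), (0 : ZMod q)) := by
        refine Prod.ext ?_ ?_
        · show a = a.val • (1 : ZMod p)
          rw [nsmul_eq_mul, mul_one, ZMod.natCast_val, ZMod.cast_id]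
        · show (0 : ZMod q) = a.val • (0 : ZMod q)
          rw [smul_zero]
      have hb : ((0 : ZMod p), b) = b.val • ((0 : ZMod p), (1 : ZMod q)) := by
        refine Prod.ext ?_ ?_
        · show (0 : ZMod p) = b.val • (0 : ZMod p)
          rw [smul_zero]
        · show b = b.val • (1 : ZMod q)
          rw [nsmul_eq_mul, mul_one, ZMod.natCast_val, ZMod.cast_id]
      have : ((a, b) : PQΓ p q) = (a, (0 : ZMod q)) + ((0 : ZMod p), b) := by
        refine Prod.ext (by simp) (by simp)
      rw [this, ha, hb]
      exact AddSubgroup.add_mem _ (AddSubgroup.nsmul_mem _ h1m _)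
        (AddSubgroup.nsmul_mem _ h2m _)
    calc subgroupRank K ≤ _ := subgroupRank_le_finsetCard K _ hgen
      _ ≤ 2 := Finset.card_insert_le _ _ |>.trans (by simp)

end PQ

end RankFacts
namespace UMG

section UMGLemmas

variable {M : UMG}

lemma Betw.symm {e : M.E} {u w : M.V} (h : M.Betw e u w) : M.Betw e w u :=
  h.elim Or.inr Or.inl

lemma Betw.inc_left {e : M.E} {u w : M.V} (h : M.Betw e u w) :
    M.Incident e u := h.elim (fun h' => Or.inl h'.1) (fun h' => Or.inr h'.2)

lemma Betw.inc_right {e : M.E} {u w : M.V} (h : M.Betw e u w) :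
    M.Incident e w := h.symm.inc_left

lemma Reaches.mono {F F' : Set M.E} (h : F ⊆ F') {u w : M.V}
    (hr : M.Reaches F u w) : M.Reaches F' u w :=
  Relation.ReflTransGen.mono (r := fun u w => ∃ e ∈ F, M.Betw e u w)
    (p := fun u w => ∃ e ∈ F', M.Betw e u w) (fun _ _ ⟨e, he, hb⟩ => ⟨e, h he, hb⟩) _ _ hr

lemma Reaches.symm {F : Set M.E} {u w : M.V} (hr : M.Reaches F u w) :
    M.Reaches F w u :=
  haveI : Std.Symm (fun u w => ∃ e ∈ F, M.Betw e u w) :=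
    ⟨fun _ _ ⟨e, he, hb⟩ => ⟨e, he, hb.symm⟩⟩
  Relation.ReflTransGen.stdSymm.symm _ _ hr

lemma Reaches.trans {F : Set M.E} {u v w : M.V} (h1 : M.Reaches F u v)
    (h2 : M.Reaches F v w) : M.Reaches F u w :=
  Relation.ReflTransGen.trans h1 h2

lemma mem_uverts {F : Set M.E} {e : M.E} {v : M.V} (he : e ∈ F)
    (hv : M.Incident e v) : v ∈ M.uverts F := ⟨e, he, hv⟩

lemma uverts_mono {F F' : Set M.E} (h : F ⊆ F') : M.uverts F ⊆ M.uverts F' :=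
  fun _ ⟨e, he, hv⟩ => ⟨e, h he, hv⟩

lemma uverts_union (A B : Set M.E) :
    M.uverts (A ∪ B) = M.uverts A ∪ M.uverts B := by
  ext v
  constructor
  · rintro ⟨e, he | he, hv⟩
    · exact Or.inl ⟨e, he, hv⟩
    · exact Or.inr ⟨e, he, hv⟩
  · rintro (⟨e, he, hv⟩ | ⟨e, he, hv⟩)
    · exact ⟨e, Or.inl he, hv⟩
    · exact ⟨e, Or.inr he, hv⟩

lemma uverts_nonempty {F : Set M.E} (h : F.Nonempty) :
    (M.uverts F).Nonempty := by
  obtain ⟨e, he⟩ := h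
  exact ⟨M.fst e, e, he, Or.inl rfl⟩

end UMGLemmas

end UMG

namespace CMG

section Shift

variable {Γ : Type} [AddCommGroup Γ] {G : CMG Γ}

variable (G) in
/-- Translation of lift vertices by `g`. -/
def shV (g : Γ) (x : (G.liftU).V) : (G.liftU).V := (x.1, x.2 + g)

variable (G) in
/-- Translation of lift edges by `g`. -/
def shE (g : Γ) (ε : (G.liftU).E) : (G.liftU).E := (ε.1, ε.2 + g)

lemma shV_injective (g : Γ) : Function.Injective (G.shV g) := by
  intro x y h
  obtain ⟨h1, h2⟩ := Prod.mk.injEq _ _ _ _ ▸ h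
  exact Prod.ext h1 (by exact add_right_cancel h2)

lemma shE_injective (g : Γ) : Function.Injective (G.shE g) := by
  intro x y h
  obtain ⟨h1, h2⟩ := Prod.mk.injEq _ _ _ _ ▸ h
  exact Prod.ext h1 (by exact add_right_cancel h2)

lemma fst_shE (g : Γ) (ε : (G.liftU).E) :
    (G.liftU).fst (G.shE g ε) = G.shV g ((G.liftU).fst ε) := rfl

lemma snd_shE (g : Γ) (ε : (G.liftU).E) :
    (G.liftU).snd (G.shE g ε) = G.shV g ((G.liftU).snd ε) := by
  show (G.dst ε.1, G.color ε.1 + (ε.2 + g)) = (G.dst ε.1, G.color ε.1 + ε.2 + g)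
  exact Prod.ext rfl (by abel)

lemma betw_shE {g : Γ} {ε : (G.liftU).E} {u w : (G.liftU).V}
    (h : (G.liftU).Betw ε u w) :
    (G.liftU).Betw (G.shE g ε) (G.shV g u) (G.shV g w) := by
  rcases h with ⟨h1, h2⟩ | ⟨h1, h2⟩
  · exact Or.inl ⟨by rw [fst_shE, h1], by rw [snd_shE, h2]⟩
  · exact Or.inr ⟨by rw [fst_shE, h1], by rw [snd_shE, h2]⟩

lemma reaches_shE {g : Γ} {A : Set (G.liftU).E} {u w : (G.liftU).V}
    (h : (G.liftU).Reaches A u w) :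
    (G.liftU).Reaches (G.shE g '' A) (G.shV g u) (G.shV g w) := by
  induction h with
  | refl => exact Relation.ReflTransGen.refl
  | tail _ hbc ih =>
      obtain ⟨ε, hε, hb⟩ := hbc
      exact Relation.ReflTransGen.tail ih ⟨G.shE g ε, ⟨ε, hε, rfl⟩, betw_shE hb⟩

lemma uverts_shE (g : Γ) (A : Set (G.liftU).E) :
    (G.liftU).uverts (G.shE g '' A) = G.shV g '' ((G.liftU).uverts A) := by
  ext x
  constructor
  · rintro ⟨ε, ⟨ε', hε', rfl⟩, hinc⟩
    rcases hinc with h | h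
    · exact ⟨(G.liftU).fst ε', ⟨ε', hε', Or.inl rfl⟩, by rw [← fst_shE, h]⟩
    · exact ⟨(G.liftU).snd ε', ⟨ε', hε', Or.inr rfl⟩, by rw [← snd_shE, h]⟩
  · rintro ⟨y, ⟨ε, hε, hinc⟩, rfl⟩
    rcases hinc with h | h
    · exact ⟨G.shE g ε, ⟨ε, hε, rfl⟩, Or.inl (by rw [fst_shE, h])⟩
    · exact ⟨G.shE g ε, ⟨ε, hε, rfl⟩, Or.inr (by rw [snd_shE, h])⟩

lemma ncard_shE (g : Γ) (A : Set (G.liftU).E) :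
    (G.shE g '' A).ncard = A.ncard :=
  Set.ncard_image_of_injective A (shE_injective g)

lemma ncard_shV (g : Γ) (A : Set (G.liftU).V) :
    (G.shV g '' A).ncard = A.ncard :=
  Set.ncard_image_of_injective A (shV_injective g)

lemma shE_union_eq_liftEdges (C : Set (G.liftU).E) :
    ⋃ g : Γ, G.shE g '' C = G.liftEdges {e | ∃ δ, (e, δ) ∈ C} := by
  ext ε
  constructor
  · rintro ⟨_, ⟨g, rfl⟩, ⟨ε', hε', rfl⟩⟩
    exact ⟨ε'.2, hε'⟩
  · rintro ⟨δ, hδ⟩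
    refine Set.mem_iUnion.mpr ⟨ε.2 - δ, (ε.1, δ), hδ, ?_⟩
    show (ε.1, δ + (ε.2 - δ)) = ε
    erw [add_sub_cancel, Prod.mk.eta]

end Shift

end CMG
namespace CMG

section Split

variable {Γ : Type} [AddCommGroup Γ] {G : CMG Γ}

lemma vertsIn_union (A B : Set G.E) :
    G.vertsIn (A ∪ B) = G.vertsIn A ∪ G.vertsIn B := by
  ext v
  constructor
  · rintro ⟨e, he | he, hv⟩
    · exact Or.inl ⟨e, he, hv⟩
    · exact Or.inr ⟨e, he, hv⟩
  · rintro (⟨e, he, hv⟩ | ⟨e, he, hv⟩)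
    · exact ⟨e, Or.inl he, hv⟩
    · exact ⟨e, Or.inr he, hv⟩

lemma vertsIn_mono {A B : Set G.E} (h : A ⊆ B) : G.vertsIn A ⊆ G.vertsIn B :=
  fun _ ⟨e, he, hv⟩ => ⟨e, h he, hv⟩

variable {F : Set G.E} {v₀ : G.V}

/-- The edges of `F` in the component of `v₀`. -/
private abbrev spA (G : CMG Γ) (F : Set G.E) (v₀ : G.V) : Set G.E :=
  {e | e ∈ F ∧ G.Reaches F v₀ (G.src e)}

/-- The edges of `F` outside the component of `v₀`. -/
private abbrev spB (G : CMG Γ) (F : Set G.E) (v₀ : G.V) : Set G.E :=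
  {e | e ∈ F ∧ ¬ G.Reaches F v₀ (G.src e)}

lemma reaches_dst {e : G.E} (he : e ∈ F) :
    G.Reaches F (G.src e) (G.dst e) := ⟨_, (Walk.nil (G.dst e)).fwd e he⟩

lemma walk_to_spA {v w : G.V} {γ : Γ} (h : G.Walk F v w γ)
    (hv : G.Reaches F v₀ v) : G.Walk (spA G F v₀) v w γ := by
  induction h with
  | nil v => exact .nil v
  | fwd e he hw ih =>
      exact .fwd e ⟨he, hv⟩ (ih (hv.trans (reaches_dst he)))
  | bwd e he hw ih =>
      have hsrc : G.Reaches F v₀ (G.src e) := hv.trans (reaches_dst he).symm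
      exact .bwd e ⟨he, hsrc⟩ (ih hsrc)

lemma walk_to_spB {v w : G.V} {γ : Γ} (h : G.Walk F v w γ)
    (hv : ¬ G.Reaches F v₀ v) : G.Walk (spB G F v₀) v w γ := by
  induction h with
  | nil v => exact .nil v
  | fwd e he hw ih =>
      have hd : ¬ G.Reaches F v₀ (G.dst e) :=
        fun h' => hv (h'.trans (reaches_dst he).symm)
      exact .fwd e ⟨he, hv⟩ (ih hd)
  | bwd e he hw ih =>
      have hs : ¬ G.Reaches F v₀ (G.src e) :=
        fun h' => hv (h'.trans (reaches_dst he))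
      exact .bwd e ⟨he, hs⟩ (ih hs)

lemma mem_vertsIn_spA {v : G.V} (hv : v ∈ G.vertsIn (spA G F v₀)) :
    G.Reaches F v₀ v := by
  obtain ⟨e, ⟨he, hr⟩, hinc⟩ := hv
  rcases hinc with h | h
  · exact h ▸ hr
  · exact h ▸ hr.trans (reaches_dst he)

lemma mem_vertsIn_spB {v : G.V} (hv : v ∈ G.vertsIn (spB G F v₀)) :
    ¬ G.Reaches F v₀ v := by
  obtain ⟨e, ⟨he, hr⟩, hinc⟩ := hv
  rcases hinc with h | h
  · exact h ▸ hr
  · exact h ▸ fun h' => hr (h'.trans (reaches_dst he).symm)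

lemma comp_spA {v : G.V} (hv : G.Reaches F v₀ v) :
    G.comp (spA G F v₀) v = G.comp F v := by
  ext w
  constructor
  · rintro ⟨γ, hγ⟩
    exact ⟨γ, hγ.mono (fun e he => he.1)⟩
  · rintro ⟨γ, hγ⟩
    exact ⟨γ, walk_to_spA hγ hv⟩

lemma gain_spA {v : G.V} (hv : G.Reaches F v₀ v) :
    G.gainGroup (spA G F v₀) v = G.gainGroup F v := by
  rw [gainGroup_eq_walkGains, gainGroup_eq_walkGains]
  ext γ
  exact ⟨fun h => (h : G.Walk _ v v γ).mono (fun e he => he.1),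
    fun h => walk_to_spA h hv⟩

lemma comp_spB {v : G.V} (hv : ¬ G.Reaches F v₀ v) :
    G.comp (spB G F v₀) v = G.comp F v := by
  ext w
  constructor
  · rintro ⟨γ, hγ⟩
    exact ⟨γ, hγ.mono (fun e he => he.1)⟩
  · rintro ⟨γ, hγ⟩
    exact ⟨γ, walk_to_spB hγ hv⟩

lemma gain_spB {v : G.V} (hv : ¬ G.Reaches F v₀ v) :
    G.gainGroup (spB G F v₀) v = G.gainGroup F v := by
  rw [gainGroup_eq_walkGains, gainGroup_eq_walkGains]
  ext γ
  exact ⟨fun h => (h : G.Walk _ v v γ).mono (fun e he => he.1),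
    fun h => walk_to_spB h hv⟩

lemma spA_union_spB : spA G F v₀ ∪ spB G F v₀ = F := by
  ext e
  constructor
  · rintro (⟨he, _⟩ | ⟨he, _⟩) <;> exact he
  · intro he
    by_cases h : G.Reaches F v₀ (G.src e)
    · exact Or.inl ⟨he, h⟩
    · exact Or.inr ⟨he, h⟩

lemma spA_disjoint_spB : Disjoint (spA G F v₀) (spB G F v₀) := by
  rw [Set.disjoint_left]
  rintro e ⟨_, h⟩ ⟨_, h'⟩
  exact h' h

lemma compCount_split (i : ℕ) :
    G.compCount F i = G.compCount (spA G F v₀) i + G.compCount (spB G F v₀) i := by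
  rw [compCount, compCount, compCount]
  have hset : {S : Set G.V | ∃ v ∈ G.vertsIn F, S = G.comp F v ∧
      subgroupRank (G.gainGroup F v) = i}
      = {S : Set G.V | ∃ v ∈ G.vertsIn (spA G F v₀), S = G.comp (spA G F v₀) v ∧
          subgroupRank (G.gainGroup (spA G F v₀) v) = i}
        ∪ {S : Set G.V | ∃ v ∈ G.vertsIn (spB G F v₀), S = G.comp (spB G F v₀) v ∧
          subgroupRank (G.gainGroup (spB G F v₀) v) = i} := by
    ext S
    constructor
    · rintro ⟨v, hv, rfl, hrank⟩
      by_cases h : G.Reaches F v₀ v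
      · refine Or.inl ⟨v, ?_, (comp_spA h).symm, by rw [gain_spA h]; exact hrank⟩
        obtain ⟨e, he, hinc⟩ := hv
        rcases hinc with h' | h'
        · exact ⟨e, ⟨he, h' ▸ h⟩, Or.inl h'⟩
        · exact ⟨e, ⟨he, (h' ▸ h : G.Reaches F v₀ (G.dst e)).trans
            (reaches_dst he).symm⟩, Or.inr h'⟩
      · refine Or.inr ⟨v, ?_, (comp_spB h).symm, by rw [gain_spB h]; exact hrank⟩
        obtain ⟨e, he, hinc⟩ := hv
        rcases hinc with h' | h'
        · exact ⟨e, ⟨he, h' ▸ h⟩, Or.inl h'⟩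
        · refine ⟨e, ⟨he, fun hr => ?_⟩, Or.inr h'⟩
          exact h (h' ▸ (hr.trans (reaches_dst he)))
    · rintro (⟨v, hv, rfl, hrank⟩ | ⟨v, hv, rfl, hrank⟩)
      · have hr := mem_vertsIn_spA hv
        exact ⟨v, vertsIn_mono (fun e he => he.1) hv, comp_spA hr,
          by rw [← gain_spA hr]; exact hrank⟩
      · have hr := mem_vertsIn_spB hv
        exact ⟨v, vertsIn_mono (fun e he => he.1) hv, comp_spB hr,
          by rw [← gain_spB hr]; exact hrank⟩
  rw [hset]
  refine Set.ncard_union_eq ?_ (Set.toFinite _) (Set.toFinite _)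
  rw [Set.disjoint_left]
  rintro S ⟨v, hv, rfl, _⟩ ⟨w, hw, hSw, _⟩
  have hrv := mem_vertsIn_spA hv
  have hrw := mem_vertsIn_spB hw
  have hvS : v ∈ G.comp (spA G F v₀) v := Reaches.refl _ v
  rw [hSw, comp_spB hrw] at hvS
  rw [comp_spA hrv] at hSw
  exact hrw (hrv.trans (hvS : G.Reaches F w v).symm)

end Split

end CMG
namespace CMG

section Backward

variable {p q : ℕ}

theorem coneLamanSparse_of_liftLamanSparse (hp : p.Prime) (hq : q.Prime)
    (hop : Odd p) (hoq : Odd q) (hpq : p ≠ q) (G : CMG (ZMod p × ZMod q))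
    (hl : (CMG.liftU G).LamanSparse) : G.IsConeLamanSparse := by
  classical
  haveI := finite_PQΓ hp hq
  haveI : Finite (G.liftU).E := inferInstanceAs (Finite (G.E × (ZMod p × ZMod q)))
  haveI : Finite (G.liftU).V := inferInstanceAs (Finite (G.V × (ZMod p × ZMod q)))
  have main : ∀ n (F : Set G.E), F.ncard = n → G.ConeLamanCount F := by
    intro n
    induction n using Nat.strong_induction_on with
    | _ n ih =>
      intro F hn
      rcases F.eq_empty_or_nonempty with rfl | hne
      · have h1 : G.vertsIn (∅ : Set G.E) = ∅ := by
          ext v; simp [vertsIn]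
        have h2 : ∀ i, G.compCount (∅ : Set G.E) i = 0 := by
          intro i
          rw [compCount]
          convert Set.ncard_empty (Set G.V) using 2
          ext S; simp [h1]
        show ((∅ : Set G.E).ncard : ℤ) ≤ _
        rw [h1, h2, h2, h2]
        simp
      · obtain ⟨e₀, he₀⟩ := hne
        set v₀ := G.src e₀ with hv₀def
        rcases (spB G F v₀).eq_empty_or_nonempty with hB | hB
        · -- connected case
          have hconn : ∀ e ∈ F, G.Reaches F v₀ (G.src e) := by
            intro e he
            have h' : e ∈ spA G F v₀ ∪ spB G F v₀ := by
              rw [spA_union_spB]; exact he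
            rcases h' with h | h
            · exact h.2
            · rw [hB] at h; exact absurd h (Set.notMem_empty e)
          have hv₀ : v₀ ∈ G.vertsIn F := ⟨e₀, he₀, Or.inl rfl⟩
          have hlift := hl (G.compE F v₀ 0) (Set.toFinite _)
            (compE_nonempty ⟨e₀, he₀⟩ hconn)
          rw [uverts_compE hv₀ hconn, ncard_compE hconn, ncard_compV,
            comp_eq_vertsIn hv₀ hconn] at hlift
          have hcc := fun i => compCount_connected (G := G) hv₀ hconn i
          show (F.ncard : ℤ) ≤ _
          rw [hcc 0, hcc 1, hcc 2]
          by_cases hbot : G.walkGains F v₀ = ⊥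
          · have hr0 : subgroupRank (G.gainGroup F v₀) = 0 := by
              rw [gainGroup_eq_walkGains, hbot, subgroupRank_bot]
            rw [hr0]
            have hd1 : Nat.card (G.walkGains F v₀) = 1 := by
              rw [hbot]; exact AddSubgroup.card_eq_one.mpr rfl
            rw [hd1] at hlift
            push_cast at hlift ⊢
            simp only [mul_one] at hlift
            norm_num
            linarith
          · have hrne : subgroupRank (G.gainGroup F v₀) ≠ 0 := by
              intro h0
              have hb := eq_bot_of_subgroupRank_eq_zero
                (K := G.gainGroup F v₀) h0
              rw [gainGroup_eq_walkGains] at hb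
              exact hbot hb
            have hd3 : 3 ≤ Nat.card (G.walkGains F v₀) :=
              card_subgroup_PQ hp hq hop hoq hpq hbot
            have hmn : (F.ncard : ℤ) ≤ 2 * (G.vertsIn F).ncard - 1 := by
              by_contra hcon
              push_neg at hcon
              have h2nm : (2 * (G.vertsIn F).ncard : ℤ) ≤ F.ncard := by linarith
              have hdpos : (0:ℤ) < (Nat.card (G.walkGains F v₀) : ℤ) := by
                exact_mod_cast lt_of_lt_of_le (by norm_num) hd3
              have hmul := mul_le_mul_of_nonneg_right h2nm (le_of_lt hdpos)
              push_cast at hlift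
              linarith
            rw [if_neg hrne]
            by_cases h1 : subgroupRank (G.gainGroup F v₀) = 1
            · rw [if_pos h1, if_neg (by omega : ¬ subgroupRank (G.gainGroup F v₀) = 2)]
              push_cast
              linarith
            · rw [if_neg h1]
              by_cases h2 : subgroupRank (G.gainGroup F v₀) = 2
              · rw [if_pos h2]; push_cast; linarith
              · rw [if_neg h2]; push_cast; linarith
        · -- disconnected case
          have hAne : (spA G F v₀).Nonempty := ⟨e₀, he₀, Reaches.refl F v₀⟩
          have hAsub : spA G F v₀ ⊆ F := fun e he => he.1
          have hBsub : spB G F v₀ ⊆ F := fun e he => he.1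
          have hAss : spA G F v₀ ⊂ F := by
            refine ⟨hAsub, fun hc => ?_⟩
            obtain ⟨e, he⟩ := hB
            exact he.2 (hc he.1).2
          have hBss : spB G F v₀ ⊂ F := by
            refine ⟨hBsub, fun hc => ?_⟩
            exact (hc he₀).2 (Reaches.refl F v₀)
          have hmA : (spA G F v₀).ncard < n :=
            hn ▸ Set.ncard_lt_ncard hAss (Set.toFinite F)
          have hmB : (spB G F v₀).ncard < n :=
            hn ▸ Set.ncard_lt_ncard hBss (Set.toFinite F)
          have ihA := ih _ hmA (spA G F v₀) rfl
          have ihB := ih _ hmB (spB G F v₀) rfl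
          have hms : F.ncard = (spA G F v₀).ncard + (spB G F v₀).ncard := by
            rw [← Set.ncard_union_eq spA_disjoint_spB (Set.toFinite _)
              (Set.toFinite _), spA_union_spB]
          have hvu : G.vertsIn F
              = G.vertsIn (spA G F v₀) ∪ G.vertsIn (spB G F v₀) := by
            rw [← vertsIn_union, spA_union_spB]
          have hvd : Disjoint (G.vertsIn (spA G F v₀)) (G.vertsIn (spB G F v₀)) := by
            rw [Set.disjoint_left]
            intro v hv hv'
            exact (mem_vertsIn_spB hv') (mem_vertsIn_spA hv)
          have hvs : (G.vertsIn F).ncard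
              = (G.vertsIn (spA G F v₀)).ncard + (G.vertsIn (spB G F v₀)).ncard := by
            rw [hvu, Set.ncard_union_eq hvd (Set.toFinite _) (Set.toFinite _)]
          have hcs := fun i => compCount_split (G := G) (F := F) (v₀ := v₀) i
          show (F.ncard : ℤ) ≤ _
          rw [hms, hvs, hcs 0, hcs 1, hcs 2]
          have hA' : ((spA G F v₀).ncard : ℤ) ≤
              2 * (G.vertsIn (spA G F v₀)).ncard - 3 * G.compCount (spA G F v₀) 0
                - G.compCount (spA G F v₀) 1 - G.compCount (spA G F v₀) 2 := ihA
          have hB' : ((spB G F v₀).ncard : ℤ) ≤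
              2 * (G.vertsIn (spB G F v₀)).ncard - 3 * G.compCount (spB G F v₀) 0
                - G.compCount (spB G F v₀) 1 - G.compCount (spB G F v₀) 2 := ihB
          push_cast
          linarith
  intro F
  exact main F.ncard F rfl

end Backward

end CMG
namespace CMG

section BackwardEq

variable {p q : ℕ}

theorem isConeLaman_of_liftLamanSparse (hp : p.Prime) (hq : q.Prime)
    (hop : Odd p) (hoq : Odd q) (hpq : p ≠ q) (G : CMG (ZMod p × ZMod q))
    (hcard : (Nat.card G.E : ℤ) = 2 * Nat.card G.V - 1)
    (hl : (CMG.liftU G).LamanSparse) : G.IsConeLaman := by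
  classical
  haveI := finite_PQΓ hp hq
  have hs := coneLamanSparse_of_liftLamanSparse hp hq hop hoq hpq G hl
  refine ⟨hs, ?_⟩
  have hsu := hs Set.univ
  have hmE : (Set.univ : Set G.E).ncard = Nat.card G.E := Set.ncard_univ _
  have hnV : (Set.univ : Set G.V).ncard = Nat.card G.V := Set.ncard_univ _
  have hsub : G.vertsIn Set.univ ⊆ Set.univ := Set.subset_univ _
  have hnv_le : (G.vertsIn Set.univ).ncard ≤ Nat.card G.V := by
    rw [← hnV]
    exact Set.ncard_le_ncard hsub (Set.toFinite _)
  -- the sparse count at univ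
  have hineq : (Nat.card G.E : ℤ) ≤ 2 * (G.vertsIn Set.univ).ncard
      - 3 * G.compCount Set.univ 0 - G.compCount Set.univ 1
      - G.compCount Set.univ 2 := by
    rw [← hmE]; exact hsu
  -- E is nonempty
  have hV1 : 1 ≤ Nat.card G.V := by omega
  have hE1 : 1 ≤ Nat.card G.E := by omega
  have hEne : Nonempty G.E := (Nat.card_pos_iff.mp (by omega)).1
  obtain ⟨e₀⟩ := hEne
  set v₁ := G.src e₀ with hv₁def
  have hv₁ : v₁ ∈ G.vertsIn Set.univ := ⟨e₀, Set.mem_univ e₀, Or.inl rfl⟩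
  set r := subgroupRank (G.gainGroup Set.univ v₁) with hrdef
  have hr2 : r ≤ 2 := subgroupRank_le_two_PQ hp hq hpq _
  have hmem : G.comp Set.univ v₁ ∈ {S : Set G.V | ∃ v ∈ G.vertsIn Set.univ,
      S = G.comp Set.univ v ∧ subgroupRank (G.gainGroup Set.univ v) = r} :=
    ⟨v₁, hv₁, rfl, rfl⟩
  have hcr : 1 ≤ G.compCount Set.univ r := by
    rw [compCount]
    rw [Nat.one_le_iff_ne_zero, ← Nat.pos_iff_ne_zero]
    rw [Set.ncard_pos (Set.toFinite _)]
    exact ⟨_, hmem⟩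
  -- deduce the numeric structure
  have hc0 : G.compCount Set.univ 0 = 0 ∧ (G.vertsIn Set.univ).ncard = Nat.card G.V
      ∧ (G.compCount Set.univ 1 + G.compCount Set.univ 2 : ℤ) = 1 := by
    have h1 : (G.compCount Set.univ 0 : ℤ) ≥ 0 := Int.natCast_nonneg _
    have h2 : (G.compCount Set.univ 1 : ℤ) ≥ 0 := Int.natCast_nonneg _
    have h3 : (G.compCount Set.univ 2 : ℤ) ≥ 0 := Int.natCast_nonneg _
    have h4 : ((G.vertsIn Set.univ).ncard : ℤ) ≤ Nat.card G.V := by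
      exact_mod_cast hnv_le
    have h5 : 1 ≤ (G.compCount Set.univ 1 : ℤ) + G.compCount Set.univ 2 := by
      rcases (by omega : r = 0 ∨ r = 1 ∨ r = 2) with h | h | h
      · -- r = 0 : impossible unless compCount 0 ≥ 1, handled by omega below
        have : 1 ≤ G.compCount Set.univ 0 := h ▸ hcr
        -- but then the inequality above forces contradiction with hcard
        exfalso
        have : (1 : ℤ) ≤ G.compCount Set.univ 0 := by exact_mod_cast this
        omega
      · have : 1 ≤ G.compCount Set.univ 1 := h ▸ hcr
        have : (1 : ℤ) ≤ G.compCount Set.univ 1 := by exact_mod_cast this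
        omega
      · have : 1 ≤ G.compCount Set.univ 2 := h ▸ hcr
        have : (1 : ℤ) ≤ G.compCount Set.univ 2 := by exact_mod_cast this
        omega
    constructor
    · have : (G.compCount Set.univ 0 : ℤ) = 0 := by omega
      exact_mod_cast this
    constructor
    · have : ((G.vertsIn Set.univ).ncard : ℤ) = Nat.card G.V := by omega
      exact_mod_cast this
    · omega
  obtain ⟨hc00, hveq, hc12⟩ := hc0
  -- vertsIn univ = univ
  have hvuniv : G.vertsIn Set.univ = Set.univ := by
    apply Set.eq_of_subset_of_ncard_le hsub
    rw [hnV, hveq]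
  -- compCountTop = compCount univ
  have htop : ∀ i, G.compCountTop i = G.compCount Set.univ i := by
    intro i
    rw [compCountTop, compCount]
    congr 1
    ext S
    simp only [Set.mem_setOf_eq, hvuniv, Set.mem_univ, true_and]
  rw [htop 0, htop 1, htop 2, hc00]
  push_cast
  omega

end BackwardEq

end CMG
namespace CMG

section ForwardHelpers

variable {Γ : Type} [AddCommGroup Γ] {G : CMG Γ}

lemma shE_zero_image (C : Set (G.liftU).E) : G.shE 0 '' C = C := by
  have h : ∀ ε : (G.liftU).E, G.shE 0 ε = ε := by
    intro ε
    show (ε.1, ε.2 + 0) = ε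
    erw [add_zero, Prod.mk.eta]
  ext ε
  constructor
  · rintro ⟨ε', hε', rfl⟩; rwa [h ε']
  · intro hε; exact ⟨ε, hε, h ε⟩

lemma shE_neg_shE (g : Γ) (ε : (G.liftU).E) : G.shE (-g) (G.shE g ε) = ε := by
  show (ε.1, ε.2 + g + -g) = ε
  erw [add_neg_cancel_right, Prod.mk.eta]

lemma shE_shE_neg (g : Γ) (ε : (G.liftU).E) : G.shE g (G.shE (-g) ε) = ε := by
  show (ε.1, ε.2 + -g + g) = ε
  erw [neg_add_cancel_right, Prod.mk.eta]

lemma subset_shE_image {g : Γ} {F' C : Set (G.liftU).E}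
    (h : F' ⊆ G.shE g '' C) :
    G.shE (-g) '' F' ⊆ C ∧ F' = G.shE g '' (G.shE (-g) '' F') := by
  constructor
  · rintro x ⟨y, hy, rfl⟩
    obtain ⟨z, hz, rfl⟩ := h hy
    rwa [shE_neg_shE]
  · ext x
    constructor
    · intro hx
      exact ⟨G.shE (-g) x, ⟨x, hx, rfl⟩, shE_shE_neg g x⟩
    · rintro ⟨y, ⟨z, hz, rfl⟩, rfl⟩
      rwa [shE_shE_neg]

/-- In a cone-Laman-sparse graph there is no loop of color `0`. -/
lemma color_ne_zero_of_loop (hs : G.IsConeLamanSparse) (e : G.E)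
    (hl : G.src e = G.dst e) : G.color e ≠ 0 := by
  intro hc0
  have hz : ∀ {u w : G.V} {γ : Γ}, G.Walk {e} u w γ → γ = 0 := by
    intro u w γ h
    induction h with
    | nil v => rfl
    | fwd e' he' _ ih =>
        rw [Set.mem_singleton_iff] at he'
        rw [ih, he', hc0, add_zero]
    | bwd e' he' _ ih =>
        rw [Set.mem_singleton_iff] at he'
        rw [ih, he', hc0, neg_zero, add_zero]
  have hconn : ∀ e' ∈ ({e} : Set G.E), G.Reaches {e} (G.src e) (G.src e') := by
    intro e' he'
    rw [Set.mem_singleton_iff] at he'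
    rw [he']
    exact Reaches.refl _ _
  have hv₀ : G.src e ∈ G.vertsIn {e} := ⟨e, rfl, Or.inl rfl⟩
  have hbot : G.gainGroup {e} (G.src e) = ⊥ := by
    rw [gainGroup_eq_walkGains]
    rw [AddSubgroup.eq_bot_iff_forall]
    intro γ hγ
    exact hz hγ
  have hrank : subgroupRank (G.gainGroup {e} (G.src e)) = 0 := by
    rw [hbot, subgroupRank_bot]
  have hverts : G.vertsIn ({e} : Set G.E) = {G.src e} := by
    ext v
    constructor
    · rintro ⟨e', he', hinc⟩
      rw [Set.mem_singleton_iff] at he'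
      subst he'
      rcases hinc with h | h
      · exact h ▸ rfl
      · rw [Set.mem_singleton_iff, ← h, ← hl]
    · rintro rfl
      exact hv₀
  have hcount := hs {e}
  have hcc := fun i => compCount_connected (G := G) hv₀ hconn i
  rw [ConeLamanCount, hcc 0, hcc 1, hcc 2, hrank, hverts] at hcount
  simp [Set.ncard_singleton] at hcount

/-- Lifts have no self-loops when the colored graph is cone-Laman-sparse. -/
lemma lift_no_loops (hs : G.IsConeLamanSparse) (ε : (G.liftU).E) :
    (G.liftU).fst ε ≠ (G.liftU).snd ε := by
  intro h
  erw [lift_fst, lift_snd, Prod.mk.injEq] at h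
  obtain ⟨h1, h2⟩ := h
  have hc : G.color ε.1 = 0 := by
    have h3 : G.color ε.1 + ε.2 = 0 + ε.2 := by rw [zero_add]; exact h2.symm
    exact add_right_cancel h3
  exact color_ne_zero_of_loop hs ε.1 h1 hc
  
end ForwardHelpers

end CMG
namespace UMG

section MinConnected

variable {M : UMG} [Finite M.E] [Finite M.V]

lemma reaches_fst_snd {C : Set M.E} {ε : M.E} (hε : ε ∈ C) :
    M.Reaches C (M.fst ε) (M.snd ε) :=
  Relation.ReflTransGen.single ⟨ε, hε, Or.inl ⟨rfl, rfl⟩⟩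

lemma reaches_of_incident {C : Set M.E} {ε : M.E} {v w : M.V} (hε : ε ∈ C)
    (hv : M.Incident ε v) (hw : M.Incident ε w) : M.Reaches C v w := by
  have h1 : M.Reaches C (M.fst ε) v := by
    rcases hv with h | h
    · exact h ▸ Relation.ReflTransGen.refl
    · exact h ▸ reaches_fst_snd hε
  have h2 : M.Reaches C (M.fst ε) w := by
    rcases hw with h | h
    · exact h ▸ Relation.ReflTransGen.refl
    · exact h ▸ reaches_fst_snd hε
  exact h1.symm.trans h2

lemma connected_of_minimal_violation {C : Set M.E} (hne : C.Nonempty)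
    (hmin : ∀ F' : Set M.E, F'.Nonempty → F'.ncard < C.ncard →
      (F'.ncard : ℤ) ≤ 2 * (M.uverts F').ncard - 3)
    (hviol : ¬ ((C.ncard : ℤ) ≤ 2 * (M.uverts C).ncard - 3)) :
    ∀ x ∈ M.uverts C, ∀ y ∈ M.uverts C, M.Reaches C x y := by
  intro x hx y hy
  set CA := {ε | ε ∈ C ∧ M.Reaches C x (M.fst ε)} with hCAdef
  set CB := {ε | ε ∈ C ∧ ¬ M.Reaches C x (M.fst ε)} with hCBdef
  have hCAsub : CA ⊆ C := fun ε hε => hε.1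
  have hCBsub : CB ⊆ C := fun ε hε => hε.1
  have hunion : CA ∪ CB = C := by
    ext ε
    constructor
    · rintro (h | h) <;> exact h.1
    · intro hε
      by_cases h : M.Reaches C x (M.fst ε)
      · exact Or.inl ⟨hε, h⟩
      · exact Or.inr ⟨hε, h⟩
  have hCAne : CA.Nonempty := by
    obtain ⟨ε, hε, hinc⟩ := hx
    exact ⟨ε, hε, (reaches_of_incident hε hinc (Or.inl rfl))⟩
  have hreach_of_CA : ∀ ε ∈ CA, ∀ v, M.Incident ε v → M.Reaches C x v := by
    intro ε hε v hv
    exact hε.2.trans (reaches_of_incident hε.1 (Or.inl rfl) hv)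
  rcases CB.eq_empty_or_nonempty with hCB | hCB
  · -- C is connected from x
    have hall : ∀ v ∈ M.uverts C, M.Reaches C x v := by
      intro v ⟨ε, hε, hinc⟩
      have hεCA : ε ∈ CA := by
        have : ε ∈ CA ∪ CB := hunion ▸ hε
        rcases this with h | h
        · exact h
        · rw [hCB] at h; exact absurd h (Set.notMem_empty ε)
      exact hreach_of_CA ε hεCA v hinc
    exact hall y hy
  · exfalso
    have hvdisj : Disjoint (M.uverts CA) (M.uverts CB) := by
      rw [Set.disjoint_left]
      rintro v ⟨εA, hεA, hincA⟩ ⟨εB, hεB, hincB⟩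
      have hxv : M.Reaches C x v := hreach_of_CA εA hεA v hincA
      have : M.Reaches C x (M.fst εB) :=
        hxv.trans (reaches_of_incident hεB.1 hincB (Or.inl rfl))
      exact hεB.2 this
    have hedisj : Disjoint CA CB := by
      rw [Set.disjoint_left]
      rintro ε ⟨_, h⟩ ⟨_, h'⟩
      exact h' h
    have hCAss : CA ⊂ C := by
      refine ⟨hCAsub, fun hc => ?_⟩
      obtain ⟨ε, hε⟩ := hCB
      exact hε.2 (hc hε.1).2
    have hCBss : CB ⊂ C := by
      refine ⟨hCBsub, fun hc => ?_⟩
      obtain ⟨ε, hε⟩ := hCAne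
      exact (hc hε.1).2 hε.2
    have hmc : C.ncard = CA.ncard + CB.ncard := by
      rw [← hunion, Set.ncard_union_eq hedisj (Set.toFinite _) (Set.toFinite _)]
    have hvc : (M.uverts C).ncard = (M.uverts CA).ncard + (M.uverts CB).ncard := by
      rw [← hunion, uverts_union,
        Set.ncard_union_eq hvdisj (Set.toFinite _) (Set.toFinite _)]
    have hA := hmin CA hCAne (Set.ncard_lt_ncard hCAss (Set.toFinite C))
    have hB := hmin CB hCB (Set.ncard_lt_ncard hCBss (Set.toFinite C))
    apply hviol
    rw [hmc, hvc]
    push_cast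
    linarith

end MinConnected

end UMG
namespace CMG

section UnionBound

variable {Γ : Type} [AddCommGroup Γ] [Finite Γ] {G : CMG Γ}

lemma union_translates_bound (C W : Set (G.liftU).E) (S : Set Γ)
    (hCne : C.Nonempty)
    (hCsub : ∀ F' : Set (G.liftU).E, F' ⊆ C → F'.Nonempty →
      (F'.ncard : ℤ) ≤ 2 * ((G.liftU).uverts F').ncard - 2)
    (hfC : (2:ℤ) * ((G.liftU).uverts C).ncard - C.ncard ≤ 2)
    (hS0 : (0:Γ) ∈ S)
    (hW : W = ⋃ g ∈ S, G.shE g '' C)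
    (hconnW : ∀ a ∈ (G.liftU).uverts W, ∀ b ∈ (G.liftU).uverts W,
      (G.liftU).Reaches W a b) :
    (2:ℤ) * ((G.liftU).uverts W).ncard - W.ncard ≤ 2 := by
  classical
  haveI : Finite (G.liftU).E := inferInstanceAs (Finite (G.E × Γ))
  haveI : Finite (G.liftU).V := inferInstanceAs (Finite (G.V × Γ))
  have hP5g : ∀ (g : Γ) (F' : Set (G.liftU).E), F' ⊆ G.shE g '' C →
      F'.Nonempty → (F'.ncard : ℤ) ≤ 2 * ((G.liftU).uverts F').ncard - 2 := by
    intro g F' hsub hne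
    obtain ⟨h1, h2⟩ := subset_shE_image hsub
    have hb := hCsub _ h1 (hne.image _)
    rw [h2, ncard_shE, uverts_shE, ncard_shV]
    exact hb
  have hfCg : ∀ g : Γ, (2:ℤ) * ((G.liftU).uverts (G.shE g '' C)).ncard
      - (G.shE g '' C).ncard ≤ 2 := by
    intro g
    rw [uverts_shE, ncard_shV, ncard_shE]
    exact hfC
  set U : Set Γ → Set (G.liftU).E := fun T => ⋃ g ∈ T, G.shE g '' C with hU
  have hUsubW : ∀ T ⊆ S, U T ⊆ W := by
    intro T hT
    rw [hW]
    exact Set.biUnion_subset_biUnion_left hT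
  have key : ∀ k (T : Set Γ), T ⊆ S → (0:Γ) ∈ T → (S \ T).ncard = k →
      (2:ℤ) * ((G.liftU).uverts (U T)).ncard - (U T).ncard ≤ 2 →
      (2:ℤ) * ((G.liftU).uverts W).ncard - W.ncard ≤ 2 := by
    intro k
    induction k using Nat.strong_induction_on with
    | _ k ih =>
      intro T hTS hT0 hk hfT
      rcases (S \ T).eq_empty_or_nonempty with hd | hd
      · have hTSeq : T = S := subset_antisymm hTS (Set.diff_eq_empty.mp hd)
        rw [hW, ← hTSeq]
        exact hfT
      · have hCsubUT : C ⊆ U T := by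
          have : G.shE 0 '' C ⊆ U T :=
            Set.subset_biUnion_of_mem (u := fun g => G.shE g '' C) hT0
          rwa [shE_zero_image] at this
        obtain ⟨g, hgS, hshare⟩ : ∃ g, g ∈ S \ T ∧
            ((G.liftU).uverts (G.shE g '' C) ∩ (G.liftU).uverts (U T)).Nonempty := by
          obtain ⟨g₁, hg₁⟩ := hd
          obtain ⟨b, hb⟩ := UMG.uverts_nonempty (M := G.liftU) (hCne.image (G.shE g₁))
          by_cases hbT : b ∈ (G.liftU).uverts (U T)
          · exact ⟨g₁, hg₁, ⟨b, hb, hbT⟩⟩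
          · obtain ⟨a, ha⟩ := UMG.uverts_nonempty (M := G.liftU)
              (hCne.mono hCsubUT)
            have haW : a ∈ (G.liftU).uverts W :=
              UMG.uverts_mono (hUsubW T hTS) ha
            have hbW : b ∈ (G.liftU).uverts W := by
              refine UMG.uverts_mono ?_ hb
              rw [hW]
              exact Set.subset_biUnion_of_mem (u := fun g => G.shE g '' C) hg₁.1
            have hpath : (G.liftU).Reaches W a b := hconnW a haW b hbW
            have cross : ∀ v, (G.liftU).Reaches W v b →
                v ∈ (G.liftU).uverts (U T) → ∃ g, g ∈ S \ T ∧
                ((G.liftU).uverts (G.shE g '' C) ∩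
                  (G.liftU).uverts (U T)).Nonempty := by
              intro v hvb
              induction hvb using Relation.ReflTransGen.head_induction_on with
              | refl => intro hv; exact absurd hv hbT
              | @head a c hstep hrest ih2 =>
                  intro hv
                  obtain ⟨ε, hεW, hbetw⟩ := hstep
                  have hεU : ε ∈ ⋃ g ∈ S, G.shE g '' C := hW ▸ hεW
                  obtain ⟨g₂, hg₂S, hεg₂⟩ := by
                    simpa using Set.mem_iUnion₂.mp hεU
                  by_cases hg₂T : g₂ ∈ T
                  · apply ih2
                    exact UMG.mem_uverts (Set.mem_biUnion hg₂T hεg₂)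
                      hbetw.inc_right
                  · exact ⟨g₂, ⟨hg₂S, hg₂T⟩,
                      ⟨a, UMG.mem_uverts hεg₂ hbetw.inc_left, hv⟩⟩
            exact cross a hpath ha
        set B := G.shE g '' C with hB
        have hT'sub : insert g T ⊆ S := Set.insert_subset_iff.mpr ⟨hgS.1, hTS⟩
        have hcard' : (S \ insert g T).ncard < k := by
          have hseq : S \ insert g T = (S \ T) \ {g} := by
            ext x; simp only [Set.mem_diff, Set.mem_insert_iff,
              Set.mem_singleton_iff]; tauto
          rw [hseq, ← hk]
          exact Set.ncard_diff_singleton_lt_of_mem hgS (Set.toFinite _)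
        refine ih _ hcard' (insert g T) hT'sub (Set.mem_insert_of_mem g hT0) rfl ?_
        have hUins : U (insert g T) = B ∪ U T := Set.biUnion_insert g T _
        rw [hUins]
        have hEuni := Set.ncard_union_add_ncard_inter B (U T)
          (Set.toFinite _) (Set.toFinite _)
        have hVuni : (G.liftU).uverts (B ∪ U T)
            = (G.liftU).uverts B ∪ (G.liftU).uverts (U T) :=
          UMG.uverts_union _ _
        have hVuniInter := Set.ncard_union_add_ncard_inter
          ((G.liftU).uverts B) ((G.liftU).uverts (U T))
          (Set.toFinite _) (Set.toFinite _)
        have hint1 : 1 ≤ (((G.liftU).uverts B) ∩ ((G.liftU).uverts (U T))).ncard := by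
          rw [Nat.one_le_iff_ne_zero, ← Nat.pos_iff_ne_zero,
            Set.ncard_pos (Set.toFinite _)]
          exact hshare
        have hintE : ((B ∩ U T).ncard : ℤ) ≤
            2 * ((((G.liftU).uverts B) ∩ ((G.liftU).uverts (U T))).ncard : ℤ) - 2 := by
          rcases (B ∩ U T).eq_empty_or_nonempty with h | h
          · rw [h, Set.ncard_empty]
            have : (1:ℤ) ≤ (((G.liftU).uverts B) ∩ ((G.liftU).uverts (U T))).ncard := by
              exact_mod_cast hint1
            push_cast
            linarith
          · have hbnd := hP5g g _ Set.inter_subset_left h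
            have hvsub : (G.liftU).uverts (B ∩ U T) ⊆
                ((G.liftU).uverts B) ∩ ((G.liftU).uverts (U T)) :=
              Set.subset_inter (UMG.uverts_mono Set.inter_subset_left)
                (UMG.uverts_mono Set.inter_subset_right)
            have hle := Set.ncard_le_ncard hvsub (Set.toFinite _)
            have : (((G.liftU).uverts (B ∩ U T)).ncard : ℤ) ≤
                ((((G.liftU).uverts B) ∩ ((G.liftU).uverts (U T))).ncard : ℤ) := by
              exact_mod_cast hle
            linarith
        have hfB := hfCg g
        rw [hVuni]
        have h1 : ((B ∪ U T).ncard : ℤ) + ((B ∩ U T).ncard : ℤ)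
            = (B.ncard : ℤ) + ((U T).ncard : ℤ) := by exact_mod_cast hEuni
        have h2 : ((((G.liftU).uverts B) ∪ ((G.liftU).uverts (U T))).ncard : ℤ)
            + ((((G.liftU).uverts B) ∩ ((G.liftU).uverts (U T))).ncard : ℤ)
            = (((G.liftU).uverts B).ncard : ℤ)
              + (((G.liftU).uverts (U T)).ncard : ℤ) := by exact_mod_cast hVuniInter
        have hint1' : (1:ℤ) ≤ (((G.liftU).uverts B) ∩ ((G.liftU).uverts (U T))).ncard := by
          exact_mod_cast hint1
        linarith
  have hstart : (2:ℤ) * ((G.liftU).uverts (U {0})).ncard - (U {0}).ncard ≤ 2 := by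
    have : U {0} = C := by
      show ⋃ g ∈ ({(0:Γ)} : Set Γ), G.shE g '' C = C
      rw [Set.biUnion_singleton, shE_zero_image]
    rw [this]
    exact hfC
  exact key (S \ {0}).ncard {0} (Set.singleton_subset_iff.mpr hS0) rfl rfl hstart

end UnionBound

end CMG
namespace CMG

section Forward

variable {p q : ℕ}

theorem liftLamanSparse_of_coneLamanSparse (hp : p.Prime) (hq : q.Prime)
    (hop : Odd p) (hoq : Odd q) (hpq : p ≠ q) (G : CMG (ZMod p × ZMod q))
    (hs : G.IsConeLamanSparse) : (CMG.liftU G).LamanSparse := by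
  classical
  haveI := finite_PQΓ hp hq
  haveI : Finite (G.liftU).E := inferInstanceAs (Finite (G.E × (ZMod p × ZMod q)))
  haveI : Finite (G.liftU).V := inferInstanceAs (Finite (G.V × (ZMod p × ZMod q)))
  intro F₀ hfin hne₀
  by_contra hviol₀
  -- minimal violating set
  have hks : {k | ∃ C : Set (G.liftU).E, (C.Nonempty ∧
      ¬ ((C.ncard : ℤ) ≤ 2 * ((G.liftU).uverts C).ncard - 3)) ∧
      C.ncard = k}.Nonempty := ⟨F₀.ncard, F₀, ⟨hne₀, hviol₀⟩, rfl⟩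
  obtain ⟨C, hCviol, hCcard⟩ := Nat.sInf_mem hks
  have hCne := hCviol.1
  have hmin : ∀ F' : Set (G.liftU).E, F'.Nonempty → F'.ncard < C.ncard →
      (F'.ncard : ℤ) ≤ 2 * ((G.liftU).uverts F').ncard - 3 := by
    intro F' h1 h2
    by_contra h3
    have hle := Nat.sInf_le (s := {k | ∃ C : Set (G.liftU).E, (C.Nonempty ∧
      ¬ ((C.ncard : ℤ) ≤ 2 * ((G.liftU).uverts C).ncard - 3)) ∧
      C.ncard = k}) ⟨F', ⟨h1, h3⟩, rfl⟩
    omega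
  have hCineq : (2:ℤ) * ((G.liftU).uverts C).ncard - 2 ≤ C.ncard := by
    have h := hCviol.2
    push_neg at h
    linarith
  have hCconn := UMG.connected_of_minimal_violation hCne hmin hCviol.2
  -- every nonempty subset of C satisfies the (2,2) count
  have hP5 : ∀ F' : Set (G.liftU).E, F' ⊆ C → F'.Nonempty →
      (F'.ncard : ℤ) ≤ 2 * ((G.liftU).uverts F').ncard - 2 := by
    intro F' hsub hne
    by_cases h : F' = C
    · subst h
      obtain ⟨ε₁, hε₁⟩ := hne
      rcases (F' \ {ε₁}).eq_empty_or_nonempty with h1 | h1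
      · exfalso
        have hsing : F' = {ε₁} := by
          apply subset_antisymm
          · intro x hx
            by_contra hx'
            exact (Set.eq_empty_iff_forall_notMem.mp h1) x ⟨hx, hx'⟩
          · simpa using hε₁
        have huv : (G.liftU).uverts F' = {(G.liftU).fst ε₁, (G.liftU).snd ε₁} := by
          ext v
          constructor
          · rintro ⟨ε, hε, hinc⟩
            rw [hsing, Set.mem_singleton_iff] at hε
            subst hε
            rcases hinc with h' | h'
            · exact Or.inl h'.symm
            · exact Or.inr h'.symm
          · rintro (rfl | rfl)
            · exact ⟨ε₁, hε₁, Or.inl rfl⟩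
            · exact ⟨ε₁, hε₁, Or.inr rfl⟩
        have hnl := lift_no_loops hs ε₁
        have h2' : ((G.liftU).uverts F').ncard = 2 := by
          rw [huv]
          exact Set.ncard_pair hnl
        have h1' : F'.ncard = 1 := by rw [hsing]; exact Set.ncard_singleton _
        rw [h1', h2'] at hCineq
        norm_num at hCineq
      · have hlt := Set.ncard_diff_singleton_lt_of_mem hε₁ (Set.toFinite F')
        have hb := hmin (F' \ {ε₁}) h1 hlt
        have hsum : (F' \ {ε₁}).ncard + 1 = F'.ncard :=
          Set.ncard_diff_singleton_add_one hε₁ (Set.toFinite F')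
        have hvle : ((G.liftU).uverts (F' \ {ε₁})).ncard ≤
            ((G.liftU).uverts F').ncard :=
          Set.ncard_le_ncard (UMG.uverts_mono Set.diff_subset) (Set.toFinite _)
        have h1'' : ((F' \ {ε₁}).ncard : ℤ) + 1 = F'.ncard := by exact_mod_cast hsum
        have h2'' : (((G.liftU).uverts (F' \ {ε₁})).ncard : ℤ) ≤
            ((G.liftU).uverts F').ncard := by exact_mod_cast hvle
        linarith
    · have hss : F' ⊂ C := ⟨hsub, fun hc => h (subset_antisymm hsub hc)⟩
      have := hmin F' hne (Set.ncard_lt_ncard hss (Set.toFinite C))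
      linarith
  -- projection to the colored graph
  obtain ⟨ε₀, hε₀⟩ := hCne
  set F : Set G.E := {e | ∃ δ, (e, δ) ∈ C} with hFdef
  set v₀ : G.V := G.src ε₀.1 with hv₀def
  set δ₀ : ZMod p × ZMod q := ε₀.2 with hδ₀def
  have hCsubLift : C ⊆ G.liftEdges F := by
    intro ε hε
    exact ⟨ε.2, by erw [Prod.mk.eta]; assumption⟩
  have hε₀F : ε₀.1 ∈ F := ⟨ε₀.2, by erw [Prod.mk.eta]; assumption⟩
  have hv₀F : v₀ ∈ G.vertsIn F := ⟨ε₀.1, hε₀F, Or.inl rfl⟩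
  have hprojreach : ∀ ε ∈ C, (G.liftU).fst ε ∈ G.compV F v₀ δ₀ := by
    intro ε hε
    have h1 : (G.liftU).fst ε₀ ∈ (G.liftU).uverts C :=
      UMG.mem_uverts hε₀ (Or.inl rfl)
    have h2 : (G.liftU).fst ε ∈ (G.liftU).uverts C :=
      UMG.mem_uverts hε (Or.inl rfl)
    exact (hCconn _ h1 _ h2).mono hCsubLift
  have hconnF : ∀ e ∈ F, G.Reaches F v₀ (G.src e) := by
    rintro e ⟨δ, hδ⟩
    have h3 := mem_compV_iff.mp (hprojreach (e, δ) hδ)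
    exact ⟨_, h3⟩
  have hCW : C ⊆ G.compE F v₀ δ₀ := by
    intro ε hε
    exact ⟨⟨ε.2, by erw [Prod.mk.eta]; assumption⟩, hprojreach ε hε⟩
  set W := G.compE F v₀ δ₀ with hWdef
  set S : Set (ZMod p × ZMod q) := {g | ((G.shE g '' C) ∩ W).Nonempty} with hSdef
  have hS0 : (0 : ZMod p × ZMod q) ∈ S := by
    rw [hSdef, Set.mem_setOf_eq, shE_zero_image]
    exact ⟨ε₀, hε₀, hCW hε₀⟩
  have htCsubLift : ∀ g, G.shE g '' C ⊆ G.liftEdges F := by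
    rintro g ε ⟨ε', hε', rfl⟩
    refine ⟨ε'.2, ?_⟩
    show (ε'.1, ε'.2) ∈ C
    erw [Prod.mk.eta]; assumption
  have htCconn : ∀ g, ∀ x ∈ (G.liftU).uverts (G.shE g '' C),
      ∀ y ∈ (G.liftU).uverts (G.shE g '' C),
      (G.liftU).Reaches (G.shE g '' C) x y := by
    intro g x hx y hy
    rw [uverts_shE] at hx hy
    obtain ⟨x', hx', rfl⟩ := hx
    obtain ⟨y', hy', rfl⟩ := hy
    exact reaches_shE (hCconn x' hx' y' hy')
  have hSsub : ∀ g ∈ S, G.shE g '' C ⊆ W := by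
    intro g hg ε hε
    obtain ⟨εs, hεsg, hεsW⟩ := hg
    refine ⟨(htCsubLift g hε : ε.1 ∈ F), ?_⟩
    have hr1 : (G.liftU).Reaches (G.liftEdges F) (v₀, δ₀) ((G.liftU).fst εs) :=
      hεsW.2
    have hr2 : (G.liftU).Reaches (G.shE g '' C) ((G.liftU).fst εs)
        ((G.liftU).fst ε) :=
      htCconn g _ (UMG.mem_uverts hεsg (Or.inl rfl)) _
        (UMG.mem_uverts hε (Or.inl rfl))
    exact hr1.trans (hr2.mono (htCsubLift g))
  have hWU : W = ⋃ g ∈ S, G.shE g '' C := by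
    apply subset_antisymm
    · intro ε hε
      obtain ⟨⟨δ, hδ⟩, hfst⟩ := hε
      have hεim : ε ∈ G.shE (ε.2 - δ) '' C := by
        refine ⟨(ε.1, δ), hδ, ?_⟩
        show (ε.1, δ + (ε.2 - δ)) = ε
        erw [add_sub_cancel, Prod.mk.eta]
      have hgS : (ε.2 - δ) ∈ S := ⟨ε, hεim, ⟨⟨δ, hδ⟩, hfst⟩⟩
      exact Set.mem_biUnion hgS hεim
    · intro ε hε
      obtain ⟨g, hgS, hεg⟩ := Set.mem_iUnion₂.mp hε
      exact hSsub g hgS hεg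
  have hconnW : ∀ a ∈ (G.liftU).uverts W, ∀ b ∈ (G.liftU).uverts W,
      (G.liftU).Reaches W a b := by
    intro a ha b hb
    rw [hWdef, uverts_compE hv₀F hconnF] at ha hb
    exact (reaches_within_compE ha).symm.trans (reaches_within_compE hb)
  have hfC : (2:ℤ) * ((G.liftU).uverts C).ncard - C.ncard ≤ 2 := by linarith
  have hfW := union_translates_bound C W S ⟨ε₀, hε₀⟩ hP5 hfC hS0 hWU hconnW
  -- count the component
  rw [hWdef, uverts_compE hv₀F hconnF, ncard_compV,
    comp_eq_vertsIn hv₀F hconnF, ncard_compE hconnF] at hfW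
  -- hfW : 2 * ((vertsIn F).ncard * d) - F.ncard * d ≤ 2
  have hcount := hs F
  have hcc := fun i => compCount_connected (G := G) hv₀F hconnF i
  rw [ConeLamanCount, hcc 0, hcc 1, hcc 2] at hcount
  set d := Nat.card (G.walkGains F v₀) with hd
  by_cases hbot : G.walkGains F v₀ = ⊥
  · have hr0 : subgroupRank (G.gainGroup F v₀) = 0 := by
      rw [gainGroup_eq_walkGains, hbot, subgroupRank_bot]
    rw [hr0] at hcount
    norm_num at hcount
    have hd1 : d = 1 := by rw [hd, hbot]; exact AddSubgroup.card_eq_one.mpr rfl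
    rw [hd1] at hfW
    push_cast at hfW
    simp only [mul_one] at hfW
    linarith
  · have hrne : subgroupRank (G.gainGroup F v₀) ≠ 0 := by
      intro h0
      have hb := eq_bot_of_subgroupRank_eq_zero (K := G.gainGroup F v₀) h0
      rw [gainGroup_eq_walkGains] at hb
      exact hbot hb
    have hr2 : subgroupRank (G.gainGroup F v₀) ≤ 2 :=
      subgroupRank_le_two_PQ hp hq hpq _
    have hd3 : 3 ≤ d := card_subgroup_PQ hp hq hop hoq hpq hbot
    have hmn : (F.ncard : ℤ) ≤ 2 * (G.vertsIn F).ncard - 1 := by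
      rcases (by omega : subgroupRank (G.gainGroup F v₀) = 1 ∨
          subgroupRank (G.gainGroup F v₀) = 2) with h | h
      · rw [if_neg hrne, if_pos h, if_neg (by omega :
          ¬ subgroupRank (G.gainGroup F v₀) = 2)] at hcount
        push_cast at hcount
        linarith
      · rw [if_neg hrne, if_neg (by omega :
          ¬ subgroupRank (G.gainGroup F v₀) = 1), if_pos h] at hcount
        push_cast at hcount
        linarith
    have hd3' : (3:ℤ) ≤ (d:ℤ) := by exact_mod_cast hd3
    have hkey : (3:ℤ) ≤ (2 * (G.vertsIn F).ncard - F.ncard) * d := by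
      have h1 : (1:ℤ) ≤ 2 * (G.vertsIn F).ncard - F.ncard := by linarith
      nlinarith
    push_cast at hfW
    nlinarith
  
end Forward

end CMG
/-- Let `p` and `q` be distinct odd primes and `(G,γ)` a
`(ℤ/pℤ × ℤ/qℤ)`-colored graph with `n` vertices and `2n - 1` edges.  Then
`(G,γ)` is a cone-Laman graph if and only if its symmetric lift is
Laman-sparse. -/
theorem coneLaman_iff_lift_lamanSparse_pq (p q : ℕ)
    (hp : p.Prime) (hq : q.Prime) (hop : Odd p) (hoq : Odd q) (hpq : p ≠ q)
    (G : CMG (ZMod p × ZMod q))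
    (hcard : (Nat.card G.E : ℤ) = 2 * Nat.card G.V - 1) :
    G.IsConeLaman ↔ (CMG.liftU G).LamanSparse := by
  constructor
  · intro h
    exact CMG.liftLamanSparse_of_coneLamanSparse hp hq hop hoq hpq G h.1
  · intro h
    exact CMG.isConeLaman_of_liftLamanSparse hp hq hop hoq hpq G hcard h
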